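/- arXiv:1907.03158 — 9 statements merged into one kernel-verified Lean document; each statement's English description precedes it below -/
import Mathlib

section
/- Let D be a minimum dominating set of a graph G and u ∈ D with pn(u, D) = {u}. Then for each v ∈ N(u), the set D_v = (D \ {u}) ∪ {v} is also a minimum dominating set of G. -/
open SimpleGraph Finset

/-- The closed neighbourhood of a vertex. -/
def closedNbhd {V : Type} (G : SimpleGraph V) (x : V) : Set V :=
  {y | y = x ∨ G.Adj x y}

/-- `D` is a dominating set of `G`. -/
def isDomSet {V : Type} [Fintype V] [DecidableEq V] (G : SimpleGraph V) (D : Finset V) : Prop :=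
  ∀ v : V, ∃ d ∈ D, v ∈ closedNbhd G d

/-- `D` is a minimum dominating set (γ-set) of `G`. -/
def isMinDomSet {V : Type} [Fintype V] [DecidableEq V] (G : SimpleGraph V) (D : Finset V) : Prop :=
  isDomSet G D ∧ ∀ D' : Finset V, isDomSet G D' → D.card ≤ D'.card

/-- The set of `D`-private neighbours of `x`: vertices in `N[x]` not in the closed
neighbourhood of any other vertex of `D`. -/
def privN {V : Type} [Fintype V] [DecidableEq V] (G : SimpleGraph V) (D : Finset V) (x : V) :
    Set V :=
  {y | y ∈ closedNbhd G x ∧ ∀ z ∈ D, z ≠ x → y ∉ closedNbhd G z}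

/-- The γ-graph of `G`: vertices are the γ-sets of `G`, two γ-sets adjacent iff they differ
by a swap of two adjacent vertices. -/
def gammaGraph {V : Type} [Fintype V] [DecidableEq V] (G : SimpleGraph V) :
    SimpleGraph {D : Finset V // isMinDomSet G D} where
  Adj D₁ D₂ := D₁ ≠ D₂ ∧ ∃ u v : V, G.Adj u v ∧
    (D₂.1 = (D₁.1 \ {u}) ∪ {v} ∨ D₁.1 = (D₂.1 \ {u}) ∪ {v})
  symm := by
    constructor
    rintro D₁ D₂ ⟨hne, u, v, huv, h | h⟩
    · exact ⟨hne.symm, u, v, huv, Or.inr h⟩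
    · exact ⟨hne.symm, u, v, huv, Or.inl h⟩
  loopless := by constructor; rintro D ⟨hne, -⟩; exact hne rfl

theorem stmt1 {V : Type} [Fintype V] [DecidableEq V] (G : SimpleGraph V)
    (D : Finset V) (u v : V)
    (hD : isMinDomSet G D) (hu : u ∈ D) (hpn : privN G D u = {u})
    (hv : v ∈ G.neighborSet u) :
    isMinDomSet G ((D \ {u}) ∪ {v}) := by
  obtain ⟨hdom, hmin⟩ := hD
  constructor
  · intro w
    obtain ⟨d, hd, hwd⟩ := hdom w
    by_cases hdu : d = u
    · subst hdu
      by_cases h : ∃ z ∈ D, z ≠ d ∧ w ∈ closedNbhd G z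
      · obtain ⟨z, hz, hzd, hwz⟩ := h
        exact ⟨z, Finset.mem_union_left _ (Finset.mem_sdiff.mpr ⟨hz, by simp [hzd]⟩), hwz⟩
      · push_neg at h
        have hw : w ∈ privN G D d := ⟨hwd, fun z hz hzd => h z hz hzd⟩
        rw [hpn] at hw
        subst hw
        exact ⟨v, Finset.mem_union_right _ (Finset.mem_singleton_self v),
          Or.inr (G.adj_symm hv)⟩
    · exact ⟨d, Finset.mem_union_left _ (Finset.mem_sdiff.mpr ⟨hd, by simp [hdu]⟩), hwd⟩
  · intro D' hD'
    calc ((D \ {u}) ∪ {v}).card ≤ (D \ {u}).card + ({v} : Finset V).card :=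
          Finset.card_union_le _ _
      _ ≤ (D.card - 1) + 1 := by
          have : (D \ {u}).card = D.card - 1 := by
            rw [Finset.card_sdiff_of_subset (by simpa using hu)]; simp
          simp [this]
      _ = D.card := Nat.succ_pred_eq_of_pos (Finset.card_pos.mpr ⟨u, hu⟩)
      _ ≤ D'.card := hmin D' hD'
end

section
/- Let D and F be minimum dominating sets of a tree T with F = (D \ {y}) ∪ {z} for adjacent vertices y, z. Then for every x ∈ D ∩ F, |pn(x, D) \ pn(x, F)| ≤ 1 and |pn(x, F) \ pn(x, D)| ≤ 1. -/
open SimpleGraph Finset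

lemma key {V : Type} [DecidableEq V] {G : SimpleGraph V} (hA : G.IsAcyclic) {a b w1 w2 : V}
    (hab : a ≠ b)
    (h1a : w1 ∈ closedNbhd G a) (h1b : w1 ∈ closedNbhd G b)
    (h2a : w2 ∈ closedNbhd G a) (h2b : w2 ∈ closedNbhd G b)
    (h1 : w1 ≠ b) (h2 : w2 ≠ b) : w1 = w2 := by
  rw [isAcyclic_iff_path_unique] at hA
  have build : ∀ w : V, w ∈ closedNbhd G a → w ∈ closedNbhd G b → w ≠ b →
      ∃ p : G.Path a b, p.1.support = if w = a then [a, b] else [a, w, b] := by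
    intro w hwa hwb hwb'
    rcases hwa with rfl | hwa
    · rcases hwb with h | hwb
      · exact absurd h hwb'
      · exact ⟨⟨Walk.cons hwb.symm Walk.nil, by simp [Walk.isPath_def, hab]⟩, by simp⟩
    · rcases hwb with h | hwb
      · exact absurd h hwb'
      · refine ⟨⟨Walk.cons hwa (Walk.cons hwb.symm Walk.nil), ?_⟩, ?_⟩
        · simp [Walk.isPath_def, hab, hwa.ne, hwb']
        · simp [hwa.ne']
  obtain ⟨p1, hp1⟩ := build w1 h1a h1b h1
  obtain ⟨p2, hp2⟩ := build w2 h2a h2b h2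
  have hpp := hA p1 p2
  subst hpp
  rw [hp1] at hp2
  by_cases e1 : w1 = a <;> by_cases e2 : w2 = a <;> simp_all

theorem stmt4 {V : Type} [Fintype V] [DecidableEq V] (T : SimpleGraph V) (hT : T.IsTree)
    (D F : Finset V) (y z : V)
    (hD : isMinDomSet T D) (hF : isMinDomSet T F)
    (hyz : T.Adj y z) (hFD : F = (D \ {y}) ∪ {z})
    (x : V) (hxD : x ∈ D) (hxF : x ∈ F) :
    (privN T D x \ privN T F x).ncard ≤ 1 ∧ (privN T F x \ privN T D x).ncard ≤ 1 := by
  have hA := hT.IsAcyclic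
  have hxy : y ≠ x := by
    intro h
    rw [hFD, h] at hxF
    rcases Finset.mem_union.mp hxF with hh | hh
    · exact (Finset.mem_sdiff.mp hh).2 (Finset.mem_singleton_self _)
    · have hyzeq : y = z := h.trans (Finset.mem_singleton.mp hh)
      rw [← hyzeq] at hyz
      exact T.loopless.irrefl y hyz
  -- helper for the trivial case F = D
  have triv : F = D →
      (privN T D x \ privN T F x).ncard ≤ 1 ∧ (privN T F x \ privN T D x).ncard ≤ 1 := by
    intro h; subst h; simp
  by_cases hxz : x = z
  · subst hxz
    by_cases hyD : y ∈ D
    · exfalso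
      have hFeq : F = D \ {y} := by
        rw [hFD]
        exact Finset.union_eq_left.mpr (Finset.singleton_subset_iff.mpr
          (Finset.mem_sdiff.mpr ⟨hxD, by simp [Ne.symm hxy]⟩))
      have hlt : F.card < D.card := by
        rw [hFeq, Finset.sdiff_singleton_eq_erase]
        exact Finset.card_erase_lt_of_mem hyD
      exact absurd (hD.2 F hF.1) (by omega)
    · apply triv
      rw [hFD, Finset.sdiff_singleton_eq_erase, Finset.erase_eq_of_notMem hyD]
      exact Finset.union_eq_left.mpr (Finset.singleton_subset_iff.mpr hxD)
  · by_cases hyD : y ∈ D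
    · constructor
      · rw [Set.ncard_le_one]
        rintro w1 ⟨hw1, hw1'⟩ w2 ⟨hw2, hw2'⟩
        have fact : ∀ w : V, w ∈ privN T D x → w ∉ privN T F x →
            w ∈ closedNbhd T x ∧ w ∈ closedNbhd T z ∧ w ≠ z := by
          intro w hw hw'
          obtain ⟨hwx, hpriv⟩ := hw
          have hex : ∃ f ∈ F, f ≠ x ∧ w ∈ closedNbhd T f := by
            by_contra h
            push_neg at h
            exact hw' ⟨hwx, fun f hf hfx => h f hf hfx⟩
          obtain ⟨f, hfF, hfx, hwf⟩ := hex
          rw [hFD] at hfF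
          rcases Finset.mem_union.mp hfF with h | h
          · exact absurd hwf (hpriv f (Finset.mem_sdiff.mp h).1 hfx)
          · have : f = z := Finset.mem_singleton.mp h
            subst this
            refine ⟨hwx, hwf, ?_⟩
            rintro rfl
            exact hpriv y hyD hxy (Or.inr hyz)
        obtain ⟨h1a, h1b, h1⟩ := fact w1 hw1 hw1'
        obtain ⟨h2a, h2b, h2⟩ := fact w2 hw2 hw2'
        exact key hA hxz h1a h1b h2a h2b h1 h2
      · rw [Set.ncard_le_one]
        rintro w1 ⟨hw1, hw1'⟩ w2 ⟨hw2, hw2'⟩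
        have fact : ∀ w : V, w ∈ privN T F x → w ∉ privN T D x →
            w ∈ closedNbhd T x ∧ w ∈ closedNbhd T y ∧ w ≠ y := by
          intro w hw hw'
          obtain ⟨hwx, hpriv⟩ := hw
          have hex : ∃ d ∈ D, d ≠ x ∧ w ∈ closedNbhd T d := by
            by_contra h
            push_neg at h
            exact hw' ⟨hwx, fun d hd hdx => h d hd hdx⟩
          obtain ⟨d, hdD, hdx, hwd⟩ := hex
          have hzF : z ∈ F := by rw [hFD]; exact Finset.mem_union_right _ (Finset.mem_singleton_self _)
          by_cases hdy : d = y
          · subst hdy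
            refine ⟨hwx, hwd, ?_⟩
            rintro rfl
            exact hpriv z hzF (Ne.symm hxz) (Or.inr hyz.symm)
          · exact absurd hwd (hpriv d
              (by rw [hFD]; exact Finset.mem_union_left _ (Finset.mem_sdiff.mpr ⟨hdD, by simp [hdy]⟩)) hdx)
        obtain ⟨h1a, h1b, h1⟩ := fact w1 hw1 hw1'
        obtain ⟨h2a, h2b, h2⟩ := fact w2 hw2 hw2'
        exact key hA (Ne.symm hxy) h1a h1b h2a h2b h1 h2
    · -- y ∉ D
      by_cases hzD : z ∈ D
      · apply triv
        rw [hFD, Finset.sdiff_singleton_eq_erase, Finset.erase_eq_of_notMem hyD]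
        exact Finset.union_eq_left.mpr (Finset.singleton_subset_iff.mpr hzD)
      · exfalso
        have : F.card = D.card + 1 := by
          rw [hFD, Finset.sdiff_singleton_eq_erase, Finset.erase_eq_of_notMem hyD,
            Finset.union_comm, ← Finset.insert_eq, Finset.card_insert_of_notMem hzD]
        have := hF.2 D hD.1
        omega
end

section
/- For a minimum dominating set D of a tree T and a vertex z ∉ D, there is at most one vertex v ∈ D such that (D \ {v}) ∪ {z} is also a minimum dominating set of T. -/
open SimpleGraph Finset

lemma path_contra {V : Type} {T : SimpleGraph V} (hac : T.IsAcyclic) {a b x : V}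
    (p q : T.Walk a b) (hp : p.IsPath) (hq : q.IsPath)
    (hx : x ∈ q.support) (hx' : x ∉ p.support) : False := by
  have h := hac.path_unique ⟨p, hp⟩ ⟨q, hq⟩
  exact hx' (by rw [show p = q from congrArg Subtype.val h]; exact hx)

lemma key_s5 {V : Type} {T : SimpleGraph V} (hac : T.IsAcyclic)
    {v₁ v₂ z p₁ p₂ y : V} (hv : v₁ ≠ v₂) (hzv₁ : z ≠ v₁) (hzv₂ : z ≠ v₂)
    (hp₁ : p₁ = v₁ ∨ T.Adj v₁ p₁)
    (hp₁z : p₁ = z ∨ T.Adj z p₁)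
    (hp₂ : p₂ = v₂ ∨ T.Adj v₂ p₂)
    (hp₂z : p₂ = z ∨ T.Adj z p₂)
    (hy₁ : y = v₁ ∨ T.Adj v₁ y)
    (hy₂ : y = v₂ ∨ T.Adj v₂ y)
    (hyz : ¬ (y = z ∨ T.Adj z y))
    (hp₁v₂ : ¬ (p₁ = v₂ ∨ T.Adj v₂ p₁))
    (hp₂v₁ : ¬ (p₂ = v₁ ∨ T.Adj v₁ p₂)) : False := by
  push_neg at hyz hp₁v₂ hp₂v₁
  obtain ⟨hyz1, hyz2⟩ := hyz
  obtain ⟨h12, h12'⟩ := hp₁v₂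
  obtain ⟨h21, h21'⟩ := hp₂v₁
  have hp₁p₂ : p₁ ≠ p₂ := by
    rintro rfl
    rcases hp₂ with rfl | h; exact h12 rfl; exact h12' h
  have hyp₂ : y ≠ p₂ := by
    rintro rfl
    rcases hp₂z with rfl | h; exact hyz1 rfl; exact hyz2 h
  -- segment v₁ → z
  have hA : T.Adj v₁ z ∨ (T.Adj v₁ p₁ ∧ T.Adj p₁ z ∧ p₁ ≠ v₁ ∧ p₁ ≠ z) := by
    rcases hp₁ with rfl | h1
    · rcases hp₁z with h | h
      · exact absurd h.symm hzv₁
      · exact Or.inl h.symm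
    · rcases hp₁z with rfl | h2
      · exact Or.inl h1
      · exact Or.inr ⟨h1, h2.symm, h1.ne', h2.ne'⟩
  -- segment z → v₂
  have hB : T.Adj z v₂ ∨ (T.Adj z p₂ ∧ T.Adj p₂ v₂ ∧ p₂ ≠ z ∧ p₂ ≠ v₂) := by
    rcases hp₂ with rfl | h1
    · rcases hp₂z with h | h
      · exact absurd h.symm hzv₂
      · exact Or.inl h
    · rcases hp₂z with rfl | h2
      · exact Or.inl h1.symm
      · exact Or.inr ⟨h2, h1.symm, h2.ne', h1.ne'⟩
  -- segment v₁ → v₂ avoiding z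
  have hC : T.Adj v₁ v₂ ∨ (T.Adj v₁ y ∧ T.Adj y v₂ ∧ y ≠ v₁ ∧ y ≠ v₂) := by
    rcases hy₁ with rfl | h1
    · rcases hy₂ with h | h
      · exact absurd h hv
      · exact Or.inl h.symm
    · rcases hy₂ with rfl | h2
      · exact Or.inl h1
      · exact Or.inr ⟨h1, h2.symm, h1.ne', h2.ne'⟩
  rcases hC with hC | ⟨c1, c2, c3, c4⟩ <;>
  rcases hA with hA | ⟨a1, a2, a3, a4⟩ <;>
  rcases hB with hB | ⟨b1, b2, b3, b4⟩
  · exact path_contra hac (Walk.cons hC Walk.nil)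
      (Walk.cons hA (Walk.cons hB Walk.nil))
      (by simp only [Walk.isPath_def, Walk.support_cons, Walk.support_nil]; simp [hv])
      (by simp only [Walk.isPath_def, Walk.support_cons, Walk.support_nil]; simp [hzv₁.symm, hv, hzv₂])
      (x := z) (by simp) (by simp [hzv₁, hzv₂])
  · exact path_contra hac (Walk.cons hC Walk.nil)
      (Walk.cons hA (Walk.cons b1 (Walk.cons b2 Walk.nil)))
      (by simp only [Walk.isPath_def, Walk.support_cons, Walk.support_nil]; simp [hv])
      (by simp only [Walk.isPath_def, Walk.support_cons, Walk.support_nil]; simp [hzv₁.symm, h21.symm, hv, b3.symm, hzv₂, b4])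
      (x := z) (by simp) (by simp [hzv₁, hzv₂])
  · exact path_contra hac (Walk.cons hC Walk.nil)
      (Walk.cons a1 (Walk.cons a2 (Walk.cons hB Walk.nil)))
      (by simp only [Walk.isPath_def, Walk.support_cons, Walk.support_nil]; simp [hv])
      (by simp only [Walk.isPath_def, Walk.support_cons, Walk.support_nil]; simp [a3.symm, hzv₁.symm, hv, a4, h12, hzv₂])
      (x := z) (by simp) (by simp [hzv₁, hzv₂])
  · exact path_contra hac (Walk.cons hC Walk.nil)
      (Walk.cons a1 (Walk.cons a2 (Walk.cons b1 (Walk.cons b2 Walk.nil))))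
      (by simp only [Walk.isPath_def, Walk.support_cons, Walk.support_nil]; simp [hv])
      (by simp only [Walk.isPath_def, Walk.support_cons, Walk.support_nil]; simp [a3.symm, hzv₁.symm, h21.symm, hv, a4, hp₁p₂, h12, b3.symm, hzv₂, b4])
      (x := z) (by simp) (by simp [hzv₁, hzv₂])
  · exact path_contra hac (Walk.cons c1 (Walk.cons c2 Walk.nil))
      (Walk.cons hA (Walk.cons hB Walk.nil))
      (by simp only [Walk.isPath_def, Walk.support_cons, Walk.support_nil]; simp [c3.symm, hv, c4])
      (by simp only [Walk.isPath_def, Walk.support_cons, Walk.support_nil]; simp [hzv₁.symm, hv, hzv₂])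
      (x := z) (by simp) (by simp [hzv₁, Ne.symm hyz1, hzv₂])
  · exact path_contra hac (Walk.cons c1 (Walk.cons c2 Walk.nil))
      (Walk.cons hA (Walk.cons b1 (Walk.cons b2 Walk.nil)))
      (by simp only [Walk.isPath_def, Walk.support_cons, Walk.support_nil]; simp [c3.symm, hv, c4])
      (by simp only [Walk.isPath_def, Walk.support_cons, Walk.support_nil]; simp [hzv₁.symm, h21.symm, hv, b3.symm, hzv₂, b4])
      (x := z) (by simp) (by simp [hzv₁, Ne.symm hyz1, hzv₂])
  · exact path_contra hac (Walk.cons c1 (Walk.cons c2 Walk.nil))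
      (Walk.cons a1 (Walk.cons a2 (Walk.cons hB Walk.nil)))
      (by simp only [Walk.isPath_def, Walk.support_cons, Walk.support_nil]; simp [c3.symm, hv, c4])
      (by simp only [Walk.isPath_def, Walk.support_cons, Walk.support_nil]; simp [a3.symm, hzv₁.symm, hv, a4, h12, hzv₂])
      (x := z) (by simp) (by simp [hzv₁, Ne.symm hyz1, hzv₂])
  · exact path_contra hac (Walk.cons c1 (Walk.cons c2 Walk.nil))
      (Walk.cons a1 (Walk.cons a2 (Walk.cons b1 (Walk.cons b2 Walk.nil))))
      (by simp only [Walk.isPath_def, Walk.support_cons, Walk.support_nil]; simp [c3.symm, hv, c4])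
      (by simp only [Walk.isPath_def, Walk.support_cons, Walk.support_nil]; simp [a3.symm, hzv₁.symm, h21.symm, hv, a4, hp₁p₂, h12, b3.symm, hzv₂, b4])
      (x := z) (by simp) (by simp [hzv₁, Ne.symm hyz1, hzv₂])

lemma private_nonempty {V : Type} [Fintype V] [DecidableEq V] (G : SimpleGraph V)
    (D : Finset V) (hD : isMinDomSet G D) (v : V) (hv : v ∈ D) :
    ∃ p, p ∈ closedNbhd G v ∧ ∀ d ∈ D, d ≠ v → p ∉ closedNbhd G d := by
  by_contra h
  push_neg at h
  have hdom : isDomSet G (D.erase v) := by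
    intro w
    obtain ⟨d, hd, hw⟩ := hD.1 w
    by_cases hdv : d = v
    · subst hdv
      obtain ⟨d', hd', hdne, hw'⟩ := h w hw
      exact ⟨d', Finset.mem_erase.mpr ⟨hdne, hd'⟩, hw'⟩
    · exact ⟨d, Finset.mem_erase.mpr ⟨hdv, hd⟩, hw⟩
  have h1 := hD.2 _ hdom
  have h2 : (D.erase v).card = D.card - 1 := Finset.card_erase_of_mem hv
  have h3 : 0 < D.card := Finset.card_pos.mpr ⟨v, hv⟩
  omega

lemma priv_in_Nz {V : Type} [Fintype V] [DecidableEq V] (T : SimpleGraph V)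
    (D : Finset V) (v z p : V) (hv : v ∈ D)
    (hdom : isDomSet T ((D \ {v}) ∪ {z}))
    (hp : ∀ d ∈ D, d ≠ v → p ∉ closedNbhd T d) : p ∈ closedNbhd T z := by
  obtain ⟨d, hd, hpd⟩ := hdom p
  rcases Finset.mem_union.mp hd with hd | hd
  · obtain ⟨hdD, hdv⟩ := Finset.mem_sdiff.mp hd
    exact absurd hpd (hp d hdD (by simpa using hdv))
  · rwa [Finset.mem_singleton.mp hd] at hpd

theorem stmt5 {V : Type} [Fintype V] [DecidableEq V] (T : SimpleGraph V) (hT : T.IsTree)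
    (D : Finset V) (hD : isMinDomSet T D) (z : V) (hz : z ∉ D) :
    ∀ v₁ ∈ D, ∀ v₂ ∈ D,
      isMinDomSet T ((D \ {v₁}) ∪ {z}) → isMinDomSet T ((D \ {v₂}) ∪ {z}) → v₁ = v₂ := by
  intro v₁ hv₁ v₂ hv₂ hD₁ hD₂
  by_contra hne
  have hzv₁ : z ≠ v₁ := fun h => hz (h ▸ hv₁)
  have hzv₂ : z ≠ v₂ := fun h => hz (h ▸ hv₂)
  -- private neighbours w.r.t. D
  obtain ⟨p₁, hp₁N, hp₁priv⟩ := private_nonempty T D hD v₁ hv₁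
  obtain ⟨p₂, hp₂N, hp₂priv⟩ := private_nonempty T D hD v₂ hv₂
  have hp₁z : p₁ ∈ closedNbhd T z := priv_in_Nz T D v₁ z p₁ hv₁ hD₁.1 hp₁priv
  have hp₂z : p₂ ∈ closedNbhd T z := priv_in_Nz T D v₂ z p₂ hv₂ hD₂.1 hp₂priv
  have hp₁v₂ : p₁ ∉ closedNbhd T v₂ := hp₁priv v₂ hv₂ (Ne.symm hne)
  have hp₂v₁ : p₂ ∉ closedNbhd T v₁ := hp₂priv v₁ hv₁ hne
  -- private neighbour of v₁ w.r.t. D₂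
  have hv₁D₂ : v₁ ∈ (D \ {v₂}) ∪ {z} :=
    Finset.mem_union_left _ (Finset.mem_sdiff.mpr ⟨hv₁, by simpa using hne⟩)
  obtain ⟨y, hyN, hypriv⟩ := private_nonempty T ((D \ {v₂}) ∪ {z}) hD₂ v₁ hv₁D₂
  have hzD₂ : z ∈ (D \ {v₂}) ∪ {z} := Finset.mem_union_right _ (Finset.mem_singleton_self z)
  have hyz : y ∉ closedNbhd T z := hypriv z hzD₂ hzv₁
  have hyv₂ : y ∈ closedNbhd T v₂ := by
    by_contra hyv₂
    have : ∀ d ∈ D, d ≠ v₁ → y ∉ closedNbhd T d := by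
      intro d hd hdv₁
      by_cases hdv₂ : d = v₂
      · exact hdv₂ ▸ hyv₂
      · exact hypriv d (Finset.mem_union_left _ (Finset.mem_sdiff.mpr ⟨hd, by simpa using hdv₂⟩)) hdv₁
    exact hyz (priv_in_Nz T D v₁ z y hv₁ hD₁.1 this)
  exact key_s5 hT.2 hne hzv₁ hzv₂ hp₁N hp₁z hp₂N hp₂z hyN hyv₂ hyz hp₁v₂ hp₂v₁
end

section
/- A minimum dominating set D of a tree T rooted at a vertex c is the (unique) highest γ-set of (T, c) if and only if every x ∈ D \ {c} has a child y with y ∈ pn(x, D). -/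
open SimpleGraph Finset

section TreeLemmas

variable {V : Type} [DecidableEq V] (T : SimpleGraph V)

lemma dist_lt_of_mem_support {x c u : V} (w : T.Walk x c) (hw : w.length = T.dist x c)
    (hu : u ∈ w.support) (hux : u ≠ x) : T.dist u c < T.dist x c := by
  have hspec := w.take_spec hu
  have hlen : (w.takeUntil u hu).length + (w.dropUntil u hu).length = T.dist x c := by
    rw [← hw, ← SimpleGraph.Walk.length_append, hspec]
  have h1 : T.dist u c ≤ (w.dropUntil u hu).length := SimpleGraph.dist_le _
  have h2 : (w.takeUntil u hu).length ≠ 0 := fun h0 =>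
    hux (SimpleGraph.Walk.eq_of_length_eq_zero h0).symm
  omega

lemma tree_adj_dist_ne (hT : T.IsTree) {x y : V} (c : V) (h : T.Adj x y) :
    T.dist x c ≠ T.dist y c := by
  intro heq
  have hconn := hT.isConnected
  obtain ⟨p, hp, hlp⟩ := hconn.exists_path_of_dist x c
  by_cases hy : y ∈ p.support
  · have := dist_lt_of_mem_support T p hlp hy h.ne'
    omega
  · have hq : (SimpleGraph.Walk.cons h.symm p).IsPath := hp.cons hy
    obtain ⟨r, hr, hlr⟩ := hconn.exists_path_of_dist y c
    have huniq := hT.IsAcyclic.path_unique ⟨SimpleGraph.Walk.cons h.symm p, hq⟩ ⟨r, hr⟩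
    have : (SimpleGraph.Walk.cons h.symm p).length = r.length :=
      congrArg (fun z : T.Path y c => z.1.length) huniq
    rw [SimpleGraph.Walk.length_cons, hlp, hlr, heq] at this
    omega

lemma tree_adj_dist (hT : T.IsTree) {x y : V} (c : V) (h : T.Adj x y) :
    T.dist y c = T.dist x c + 1 ∨ T.dist x c = T.dist y c + 1 := by
  have hconn := hT.isConnected
  have hxy : T.dist x y = 1 := SimpleGraph.dist_eq_one_iff_adj.mpr h
  have hyx : T.dist y x = 1 := SimpleGraph.dist_eq_one_iff_adj.mpr h.symm
  have t1 : T.dist x c ≤ T.dist x y + T.dist y c := hconn.dist_triangle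
  have t2 : T.dist y c ≤ T.dist y x + T.dist x c := hconn.dist_triangle
  have hne := tree_adj_dist_ne T hT c h
  omega

lemma tree_unique_parent (hT : T.IsTree) {y y' w c : V} (h : T.Adj y w) (h' : T.Adj y' w)
    (hy : T.dist y c < T.dist w c) (hy' : T.dist y' c < T.dist w c) : y = y' := by
  have hconn := hT.isConnected
  obtain ⟨p, hp, hlp⟩ := hconn.exists_path_of_dist y c
  obtain ⟨p', hp', hlp'⟩ := hconn.exists_path_of_dist y' c
  have hw : w ∉ p.support := fun hmem => by
    rcases eq_or_ne w y with rfl | hne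
    · exact h.ne' rfl
    · exact absurd (dist_lt_of_mem_support T p hlp hmem hne) (by omega)
  have hw' : w ∉ p'.support := fun hmem => by
    rcases eq_or_ne w y' with rfl | hne
    · exact h'.ne' rfl
    · exact absurd (dist_lt_of_mem_support T p' hlp' hmem hne) (by omega)
  have hq : (SimpleGraph.Walk.cons h.symm p).IsPath := hp.cons hw
  have hq' : (SimpleGraph.Walk.cons h'.symm p').IsPath := hp'.cons hw'
  have huniq := hT.IsAcyclic.path_unique ⟨SimpleGraph.Walk.cons h.symm p, hq⟩
    ⟨SimpleGraph.Walk.cons h'.symm p', hq'⟩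
  have := congrArg (fun z : T.Path w c => z.1.getVert 1) huniq
  simpa [SimpleGraph.Walk.getVert_cons_succ, SimpleGraph.Walk.getVert_zero] using this

lemma tree_parent_exists (hT : T.IsTree) {x c : V} (hxc : x ≠ c) :
    ∃ p : V, T.Adj x p ∧ T.dist p c + 1 = T.dist x c := by
  have hconn := hT.isConnected
  have hpos : 0 < T.dist x c := hconn.pos_dist_of_ne hxc
  obtain ⟨w, hw⟩ := hconn.exists_walk_length_eq_dist x c
  cases w with
  | nil => exact absurd rfl hxc
  | cons h q =>
    rename_i p
    refine ⟨p, h, ?_⟩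
    rw [SimpleGraph.Walk.length_cons] at hw
    have h1 : T.dist p c ≤ q.length := SimpleGraph.dist_le q
    have hxp : T.dist x p = 1 := SimpleGraph.dist_eq_one_iff_adj.mpr h
    have t1 : T.dist x c ≤ T.dist x p + T.dist p c := hconn.dist_triangle
    omega

end TreeLemmas

lemma priv_clash {V : Type} [Fintype V] [DecidableEq V] (T : SimpleGraph V) (hT : T.IsTree)
    (c : V) (D : Finset V) {x x' y y' w : V}
    (hx : x ∈ D) (hx' : x' ∈ D) (hxx' : x ≠ x')
    (hadj : T.Adj x y) (hlt : T.dist x c < T.dist y c) (hpriv : y ∈ privN T D x)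
    (hadj' : T.Adj x' y') (hlt' : T.dist x' c < T.dist y' c) (hpriv' : y' ∈ privN T D x')
    (hwy : w = y ∨ T.Adj y w) (hwy' : w = y' ∨ T.Adj y' w) : False := by
  have hdy : T.dist y c = T.dist x c + 1 := by
    rcases tree_adj_dist T hT c hadj with h | h <;> omega
  have hdy' : T.dist y' c = T.dist x' c + 1 := by
    rcases tree_adj_dist T hT c hadj' with h | h <;> omega
  obtain ⟨-, hp⟩ := hpriv
  obtain ⟨-, hp'⟩ := hpriv'
  rcases hwy with rfl | hwy
  · -- w = y
    rcases hwy' with rfl | hwy'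
    · -- y = y'
      exact hp x' hx' hxx'.symm (Or.inr hadj')
    · -- Adj y' y  (named hwy' : T.Adj y' w with w = y)
      rcases tree_adj_dist T hT c hwy' with h | h
      · have : x = y' := tree_unique_parent T hT (c := c) hadj hwy' (by omega) (by omega)
        exact hp' x hx hxx' (Or.inl this.symm)
      · have : x' = w := tree_unique_parent T hT (c := c) hadj' hwy'.symm (by omega) (by omega)
        exact hp x' hx' hxx'.symm (Or.inl this.symm)
  · rcases hwy' with rfl | hwy'
    · -- w = y', Adj y w
      rcases tree_adj_dist T hT c hwy with h | h
      · have : x' = y := tree_unique_parent T hT (c := c) hadj' hwy (by omega) (by omega)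
        exact hp x' hx' hxx'.symm (Or.inl this.symm)
      · have : x = w := tree_unique_parent T hT (c := c) hadj hwy.symm (by omega) (by omega)
        exact hp' x hx hxx' (Or.inl this.symm)
    · -- Adj y w, Adj y' w
      rcases tree_adj_dist T hT c hwy with h | h
      · rcases tree_adj_dist T hT c hwy' with h' | h'
        · -- both parents of w
          have : y = y' := tree_unique_parent T hT (c := c) hwy hwy' (by omega) (by omega)
          subst this
          exact hp x' hx' hxx'.symm (Or.inr hadj')
        · -- dist w = dist y + 1, dist y' = dist w + 1 : w and x' parents of y'
          have : x' = w := tree_unique_parent T hT (c := c) hadj' hwy'.symm (by omega) (by omega)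
          subst this
          exact hp x' hx' hxx'.symm (Or.inr hwy.symm)
      · rcases tree_adj_dist T hT c hwy' with h' | h'
        · have : x = w := tree_unique_parent T hT (c := c) hadj hwy.symm (by omega) (by omega)
          subst this
          exact hp' x hx hxx' (Or.inr hwy'.symm)
        · have h1 : x = w := tree_unique_parent T hT (c := c) hadj hwy.symm (by omega) (by omega)
          have h2 : x' = w := tree_unique_parent T hT (c := c) hadj' hwy'.symm (by omega) (by omega)
          exact hxx' (h1.trans h2.symm)

lemma mem_closedNbhd_iff {V : Type} {G : SimpleGraph V} {x v : V} :
    v ∈ closedNbhd G x ↔ (v = x ∨ G.Adj x v) := Iff.rfl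

theorem stmt6 {V : Type} [Fintype V] [DecidableEq V] (T : SimpleGraph V) (hT : T.IsTree)
    (c : V) (D : Finset V) (hD : isMinDomSet T D) :
    (∀ F : Finset V, isMinDomSet T F →
        ∑ x ∈ D, T.dist x c ≤ ∑ x ∈ F, T.dist x c) ↔
      (∀ x ∈ D, x ≠ c →
        ∃ y : V, T.Adj x y ∧ T.dist x c < T.dist y c ∧ y ∈ privN T D x) := by
  constructor
  · -- forward direction
    intro hhigh x hxD hxc
    by_contra hno
    push_neg at hno
    obtain ⟨p, hadj, hp⟩ := tree_parent_exists T hT hxc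
    have hpx : p ≠ x := hadj.ne'
    have hdom' : isDomSet T (insert p (D.erase x)) := by
      intro v
      obtain ⟨d, hd, hdv⟩ := hD.1 v
      by_cases hdx : d = x
      · subst hdx
        by_cases h2 : ∃ z ∈ D, z ≠ d ∧ v ∈ closedNbhd T z
        · obtain ⟨z, hz, hzd, hvz⟩ := h2
          exact ⟨z, Finset.mem_insert_of_mem (Finset.mem_erase.mpr ⟨hzd, hz⟩), hvz⟩
        · have hprivv : v ∈ privN T D d :=
            ⟨hdv, fun z hz hzd hvz => h2 ⟨z, hz, hzd, hvz⟩⟩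
          rw [mem_closedNbhd_iff] at hdv
          rcases hdv with rfl | hdv
          · exact ⟨p, Finset.mem_insert_self _ _, Or.inr hadj.symm⟩
          · rcases tree_adj_dist T hT c hdv with h | h
            · exact absurd hprivv (hno v hdv (by omega))
            · have hvp : v = p :=
                tree_unique_parent T hT (c := c) hdv.symm hadj.symm (by omega) (by omega)
              exact ⟨p, Finset.mem_insert_self _ _, Or.inl hvp⟩
      · exact ⟨d, Finset.mem_insert_of_mem (Finset.mem_erase.mpr ⟨hdx, hd⟩), hdv⟩
    have hDpos : 0 < D.card := Finset.card_pos.mpr ⟨x, hxD⟩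
    have hpD : p ∉ D := by
      intro hpD
      have heq : insert p (D.erase x) = D.erase x :=
        Finset.insert_eq_self.mpr (Finset.mem_erase.mpr ⟨hpx, hpD⟩)
      have hcard := hD.2 _ (heq ▸ hdom')
      rw [Finset.card_erase_of_mem hxD] at hcard
      omega
    have hpe : p ∉ D.erase x := fun h => hpD (Finset.mem_erase.mp h).2
    have hcard : (insert p (D.erase x)).card = D.card := by
      rw [Finset.card_insert_of_notMem hpe, Finset.card_erase_of_mem hxD]
      omega
    have hFmin : isMinDomSet T (insert p (D.erase x)) :=
      ⟨hdom', fun D' hD' => hcard ▸ hD.2 D' hD'⟩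
    have hle := hhigh _ hFmin
    rw [Finset.sum_insert hpe] at hle
    have hsum : ∑ z ∈ D.erase x, T.dist z c + T.dist x c = ∑ z ∈ D, T.dist z c :=
      Finset.sum_erase_add D _ hxD
    omega
  · -- backward direction
    intro hpriv F hF
    choose! y hy1 hy2 hy3 using hpriv
    choose f hf1 hf2 using hF.1
    set s := D.erase c with hs
    have key : ∀ x ∈ s, T.dist x c ≤ T.dist (f (y x)) c := by
      intro x hxs
      obtain ⟨hxc, hxD⟩ := Finset.mem_erase.mp hxs
      have hdy : T.dist (y x) c = T.dist x c + 1 := by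
        have hlt := hy2 x hxD hxc
        rcases tree_adj_dist T hT c (hy1 x hxD hxc) with h | h <;> omega
      have h2 := hf2 (y x)
      rw [mem_closedNbhd_iff] at h2
      rcases h2 with h | h
      · rw [← h]; omega
      · rcases tree_adj_dist T hT c h.symm with h' | h' <;> omega
    have hinj : ∀ a ∈ s, ∀ b ∈ s, f (y a) = f (y b) → a = b := by
      intro a ha b hb hab
      by_contra hne
      obtain ⟨hac, haD⟩ := Finset.mem_erase.mp ha
      obtain ⟨hbc, hbD⟩ := Finset.mem_erase.mp hb
      refine priv_clash T hT c D haD hbD hne (hy1 a haD hac) (hy2 a haD hac) (hy3 a haD hac)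
        (hy1 b hbD hbc) (hy2 b hbD hbc) (hy3 b hbD hbc) (w := f (y a)) ?_ ?_
      · have h2 := hf2 (y a); rw [mem_closedNbhd_iff] at h2
        rcases h2 with h | h
        · exact Or.inl h.symm
        · exact Or.inr h.symm
      · rw [hab]
        have h2 := hf2 (y b); rw [mem_closedNbhd_iff] at h2
        rcases h2 with h | h
        · exact Or.inl h.symm
        · exact Or.inr h.symm
    calc ∑ x ∈ D, T.dist x c
        = ∑ x ∈ s, T.dist x c :=
          (Finset.sum_erase _ (by simp [SimpleGraph.dist_self])).symm
      _ ≤ ∑ x ∈ s, T.dist (f (y x)) c := Finset.sum_le_sum key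
      _ = ∑ z ∈ s.image (fun x => f (y x)), T.dist z c := (Finset.sum_image (f := fun z => T.dist z c) hinj).symm
      _ ≤ ∑ z ∈ F, T.dist z c := Finset.sum_le_sum_of_subset (fun z hz => by
          obtain ⟨a, -, rfl⟩ := Finset.mem_image.mp hz; exact hf1 (y a))
end

section
/- Every tree T rooted at a vertex c has a unique highest minimum dominating set, i.e., there is a unique γ-set D of T minimizing ht_T(D) = Σ_{x∈D} d(x, c). -/
open SimpleGraph Finset

set_option linter.unusedSectionVars false

section Aux

variable {V : Type} [Fintype V] [DecidableEq V] {T : SimpleGraph V}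

private lemma dist_support_le {c u x : V} (p : T.Walk u c) (hx : x ∈ p.support) :
    T.dist x c ≤ p.length :=
  le_trans (SimpleGraph.dist_le _) (p.length_dropUntil_le hx)

/-- Adjacent vertices have different distances to `c` in a tree. -/
private lemma adj_dist_ne (hT : T.IsTree) (c : V) {u v : V} (h : T.Adj u v) :
    T.dist u c ≠ T.dist v c := by
  intro heq
  obtain ⟨pu, hpu⟩ := (hT.isConnected u c).exists_walk_length_eq_dist
  have hpath : pu.IsPath := pu.isPath_of_length_eq_dist hpu
  by_cases hv : v ∈ pu.support
  · -- then dist v c ≤ dist u c - 1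
    have hspec := pu.take_spec hv
    have hlen : (pu.takeUntil v hv).length + (pu.dropUntil v hv).length = pu.length := by
      have := congrArg Walk.length hspec
      rwa [Walk.length_append] at this
    have h1 : 1 ≤ (pu.takeUntil v hv).length := by
      rcases Nat.eq_zero_or_pos (pu.takeUntil v hv).length with h0 | h0
      · exact absurd (Walk.eq_of_length_eq_zero h0) h.ne
      · exact h0
    have h2 : T.dist v c ≤ (pu.dropUntil v hv).length := SimpleGraph.dist_le _
    omega
  · -- cons gives a path v → c of length dist u c + 1, contradicting uniqueness
    obtain ⟨pv, hpv⟩ := (hT.isConnected v c).exists_walk_length_eq_dist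
    have hpvpath : pv.IsPath := pv.isPath_of_length_eq_dist hpv
    have hqpath : (Walk.cons h.symm pu).IsPath := hpath.cons hv
    have := (hT.existsUnique_path v c).unique hqpath hpvpath
    have := congrArg Walk.length this
    rw [Walk.length_cons] at this
    omega

/-- Every vertex other than `c` has a parent: a neighbour one step closer to `c`. -/
private lemma exists_parent (hT : T.IsTree) (c : V) {u : V} (hu : u ≠ c) :
    ∃ p, T.Adj u p ∧ T.dist p c + 1 = T.dist u c := by
  have hd : 0 < T.dist u c := (hT.isConnected).pos_dist_of_ne hu
  obtain ⟨w, hw⟩ := (hT.isConnected u c).exists_walk_length_eq_dist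
  cases w with
  | nil => exact absurd rfl hu
  | cons hadj q =>
    rename_i b
    refine ⟨b, hadj, ?_⟩
    have h1 : T.dist b c ≤ q.length := SimpleGraph.dist_le _
    have h2 : T.dist u c ≤ T.dist u b + T.dist b c := hT.isConnected.dist_triangle
    have h3 : T.dist u b ≤ 1 := by
      have := SimpleGraph.dist_le (Walk.cons hadj Walk.nil)
      simpa using this
    rw [Walk.length_cons] at hw
    omega

/-- The parent is unique. -/
private lemma parent_unique (hT : T.IsTree) (c : V) {u v v' : V}
    (hv : T.Adj u v) (hv' : T.Adj u v')
    (hd : T.dist v c + 1 = T.dist u c) (hd' : T.dist v' c + 1 = T.dist u c) : v = v' := by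
  obtain ⟨pv, hpv⟩ := (hT.isConnected v c).exists_walk_length_eq_dist
  obtain ⟨pv', hpv'⟩ := (hT.isConnected v' c).exists_walk_length_eq_dist
  have hpvpath : pv.IsPath := pv.isPath_of_length_eq_dist hpv
  have hpv'path : pv'.IsPath := pv'.isPath_of_length_eq_dist hpv'
  have hu : u ∉ pv.support := by
    intro hmem
    have := dist_support_le pv hmem
    omega
  have hu' : u ∉ pv'.support := by
    intro hmem
    have := dist_support_le pv' hmem
    omega
  have hq : (Walk.cons hv pv).IsPath := hpvpath.cons hu
  have hq' : (Walk.cons hv' pv').IsPath := hpv'path.cons hu'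
  have heq := (hT.existsUnique_path u c).unique hq hq'
  have := congrArg (fun w => Walk.getVert w 1) heq
  simpa [Walk.getVert_cons _ _ one_ne_zero] using this

/-- An adjacent vertex that is not the parent is one step farther from `c`. -/
private lemma dist_of_adj_ne_parent (hT : T.IsTree) (c : V) {u y p : V}
    (hadj : T.Adj u y) (hpadj : T.Adj u p) (hp : T.dist p c + 1 = T.dist u c)
    (hyp : y ≠ p) : T.dist y c = T.dist u c + 1 := by
  have h1 : T.dist y c ≤ T.dist u c + 1 := by
    have := hT.isConnected.dist_triangle (u := y) (v := u) (w := c)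
    have h2 : T.dist y u ≤ 1 := by
      have := SimpleGraph.dist_le (Walk.cons hadj.symm Walk.nil)
      simpa using this
    omega
  have h2 : T.dist u c ≤ T.dist y c + 1 := by
    have := hT.isConnected.dist_triangle (u := u) (v := y) (w := c)
    have h3 : T.dist u y ≤ 1 := by
      have := SimpleGraph.dist_le (Walk.cons hadj Walk.nil)
      simpa using this
    omega
  have hne : T.dist y c ≠ T.dist u c := (adj_dist_ne hT c hadj).symm.symm |>.symm
  rcases Nat.lt_or_ge (T.dist y c) (T.dist u c) with hlt | hge
  · -- y would be a parent, so y = p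
    have : T.dist y c + 1 = T.dist u c := by omega
    exact absurd (parent_unique hT c hadj hpadj this hp) hyp
  · omega

/-- Key step: if `D` is a minimum dominating set of minimum height, `v ∈ D`, `v ≠ c`, and
`E` is a dominating set avoiding `v`, then `E` contains a vertex not in `D` strictly
deeper than `v`. -/
private lemma key_s7 (hT : T.IsTree) (c : V) {D E : Finset V}
    (hD : isMinDomSet T D)
    (hDmin : ∀ F : Finset V, isMinDomSet T F →
      ∑ x ∈ D, T.dist x c ≤ ∑ x ∈ F, T.dist x c)
    (hE : isDomSet T E) {v : V} (hvD : v ∈ D) (hvE : v ∉ E) (hvc : v ≠ c) :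
    ∃ w ∈ E, w ∉ D ∧ T.dist v c < T.dist w c := by
  obtain ⟨p, hadj, hp⟩ := exists_parent hT c hvc
  set D' : Finset V := insert p (D.erase v) with hD'def
  have hcard' : D'.card ≤ D.card := by
    have h1 : (D.erase v).card = D.card - 1 := card_erase_of_mem hvD
    have h2 : D'.card ≤ (D.erase v).card + 1 := card_insert_le _ _
    have h3 : 1 ≤ D.card := card_pos.mpr ⟨v, hvD⟩
    omega
  have hnotdom : ¬ isDomSet T D' := by
    intro hdom
    have hmin' : isMinDomSet T D' := ⟨hdom, fun F hF => hcard'.trans (hD.2 F hF)⟩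
    have hle := hDmin D' hmin'
    by_cases hpD : p ∈ D.erase v
    · have : D' = D.erase v := insert_eq_self.mpr hpD
      have h1 : (D.erase v).card = D.card - 1 := card_erase_of_mem hvD
      have h2 := hD.2 D' hdom
      have h3 : 1 ≤ D.card := card_pos.mpr ⟨v, hvD⟩
      rw [this] at h2
      omega
    · have hsum : ∑ x ∈ D', T.dist x c = T.dist p c + ∑ x ∈ D.erase v, T.dist x c :=
        sum_insert hpD
      have hsum2 : ∑ x ∈ D.erase v, T.dist x c + T.dist v c = ∑ x ∈ D, T.dist x c :=
        sum_erase_add D _ hvD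
      omega
  simp only [isDomSet, not_forall] at hnotdom
  obtain ⟨y, hy⟩ := hnotdom
  push_neg at hy
  have hyp : y ∉ closedNbhd T p := hy p (mem_insert_self _ _)
  have hyv : y ∈ closedNbhd T v := by
    obtain ⟨d, hdD, hyd⟩ := hD.1 y
    by_cases hdv : d = v
    · rwa [hdv] at hyd
    · exact absurd hyd (hy d (mem_insert_of_mem (mem_erase.mpr ⟨hdv, hdD⟩)))
  have hprivate : ∀ z ∈ D, z ≠ v → y ∉ closedNbhd T z := by
    intro z hz hzv
    exact hy z (mem_insert_of_mem (mem_erase.mpr ⟨hzv, hz⟩))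
  have hAdjvy : T.Adj v y := by
    rcases hyv with h | h
    · exfalso; exact hyp (Or.inr (h ▸ hadj.symm))
    · exact h
  have hynep : y ≠ p := by
    intro h; exact hyp (Or.inl h)
  have hydist : T.dist y c = T.dist v c + 1 :=
    dist_of_adj_ne_parent hT c hAdjvy hadj hp hynep
  obtain ⟨w, hwE, hyw⟩ := hE y
  have hwv : w ≠ v := fun h => hvE (h ▸ hwE)
  have hwD : w ∉ D := by
    intro hwD
    exact hprivate w hwD hwv hyw
  refine ⟨w, hwE, hwD, ?_⟩
  rcases hyw with h | h
  · rw [← h]; omega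
  · -- w adjacent to y; w ≠ v so w is not the parent of y, hence deeper
    have : T.dist w c = T.dist y c + 1 :=
      dist_of_adj_ne_parent hT c (u := y) h.symm hAdjvy.symm (by omega) hwv
    omega

end Aux

theorem stmt7 {V : Type} [Fintype V] [DecidableEq V] (T : SimpleGraph V) (hT : T.IsTree)
    (c : V) :
    ∃! D : Finset V, isMinDomSet T D ∧
      ∀ F : Finset V, isMinDomSet T F →
        ∑ x ∈ D, T.dist x c ≤ ∑ x ∈ F, T.dist x c := by
  classical
  -- existence
  have hdomU : isDomSet T Finset.univ := fun v => ⟨v, mem_univ v, Or.inl rfl⟩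
  have hS0 : (Finset.univ.filter (fun D => isDomSet T D)).Nonempty :=
    ⟨Finset.univ, by simp [hdomU]⟩
  obtain ⟨D₀, hD₀mem, hD₀min⟩ :=
    Finset.exists_min_image _ (fun D : Finset V => D.card) hS0
  have hD₀ : isMinDomSet T D₀ :=
    ⟨(mem_filter.mp hD₀mem).2, fun F hF => hD₀min F (mem_filter.mpr ⟨mem_univ _, hF⟩)⟩
  have hS1 : (Finset.univ.filter (fun D => isMinDomSet T D)).Nonempty :=
    ⟨D₀, mem_filter.mpr ⟨mem_univ _, hD₀⟩⟩
  obtain ⟨D, hDmem, hDmin⟩ :=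
    Finset.exists_min_image _ (fun D : Finset V => ∑ x ∈ D, T.dist x c) hS1
  have hD : isMinDomSet T D := (mem_filter.mp hDmem).2
  have hDht : ∀ F : Finset V, isMinDomSet T F →
      ∑ x ∈ D, T.dist x c ≤ ∑ x ∈ F, T.dist x c :=
    fun F hF => hDmin F (mem_filter.mpr ⟨mem_univ _, hF⟩)
  refine ⟨D, ⟨hD, hDht⟩, ?_⟩
  -- uniqueness
  rintro E ⟨hE, hEht⟩
  by_contra hne
  have hne' : E ≠ D := hne
  have hcard : D.card = E.card := le_antisymm (hD.2 E hE.1) (hE.2 D hD.1)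
  set S : Finset V := (D \ E) ∪ (E \ D) with hSdef
  have hS : S.Nonempty := by
    by_contra h
    rw [Finset.not_nonempty_iff_eq_empty, hSdef, Finset.union_eq_empty,
      Finset.sdiff_eq_empty_iff_subset, Finset.sdiff_eq_empty_iff_subset] at h
    exact hne' (le_antisymm h.2 h.1)
  obtain ⟨v, hvS, hvmax⟩ := Finset.exists_max_image S (fun x => T.dist x c) hS
  have hvc : v ≠ c := by
    intro hvc
    -- then all of S equals c, so |S| ≤ 1, contradicting |D \ E| = |E \ D| ≥ 1
    have hsub : S ⊆ {c} := by
      intro x hx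
      have := hvmax x hx
      rw [hvc] at this
      simp only [SimpleGraph.dist_self] at this
      have : T.dist x c = 0 := by omega
      have := (hT.isConnected.dist_eq_zero_iff).mp this
      simp [this]
    have hScard : S.card ≤ 1 := (card_le_card hsub).trans (by simp)
    have hdisj : Disjoint (D \ E) (E \ D) := disjoint_sdiff_sdiff
    have hScard2 : S.card = (D \ E).card + (E \ D).card := card_union_of_disjoint hdisj
    have h1 : (D \ E).card + (D ∩ E).card = D.card := card_sdiff_add_card_inter D E
    have h2 : (E \ D).card + (E ∩ D).card = E.card := card_sdiff_add_card_inter E D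
    have h3 : D ∩ E = E ∩ D := inter_comm D E
    have h4 : (D \ E).card ≠ 0 ∨ (E \ D).card ≠ 0 := by
      by_contra h
      push_neg at h
      rw [card_eq_zero, sdiff_eq_empty_iff_subset] at h
      obtain ⟨ha, hb⟩ := h
      rw [card_eq_zero, sdiff_eq_empty_iff_subset] at hb
      exact hne' (le_antisymm hb ha)
    rw [h3] at h1
    omega
  rw [hSdef, mem_union] at hvS
  rcases hvS with hv | hv
  · rw [mem_sdiff] at hv
    obtain ⟨w, hwE, hwD, hwlt⟩ := key_s7 hT c hD hDht hE.1 hv.1 hv.2 hvc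
    have hwS : w ∈ S := mem_union_right _ (mem_sdiff.mpr ⟨hwE, hwD⟩)
    have := hvmax w hwS
    omega
  · rw [mem_sdiff] at hv
    obtain ⟨w, hwD, hwE, hwlt⟩ := key_s7 hT c hE hEht hD.1 hv.1 hv.2 hvc
    have hwS : w ∈ S := mem_union_left _ (mem_sdiff.mpr ⟨hwD, hwE⟩)
    have := hvmax w hwS
    omega
end

section
/- Let T be a tree with at least three vertices and let D be a minimum dominating set of T that has exactly one neighbour in the γ-graph T(γ). Then exactly one vertex v ∈ D has fewer than two D-external private neighbours, and moreover either v has exactly one D-external private neighbour, or v is a leaf of T with v ∈ pn(v, D). -/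
open SimpleGraph Finset

section Aux
variable {V : Type} [Fintype V] [DecidableEq V] {T : SimpleGraph V}

lemma mem_closedNbhd' {x y : V} : y ∈ closedNbhd T x ↔ y = x ∨ T.Adj x y := Iff.rfl

lemma privN_nonempty {D : Finset V} (hD : isMinDomSet T D) {v : V} (hv : v ∈ D) :
    (privN T D v).Nonempty := by
  by_contra h
  rw [Set.not_nonempty_iff_eq_empty] at h
  have hdom : isDomSet T (D.erase v) := by
    intro x
    obtain ⟨d, hd, hxd⟩ := hD.1 x
    by_cases hdv : d = v
    · subst hdv
      have hnp : x ∉ privN T D d := by rw [h]; exact Set.notMem_empty x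
      have h2 : ¬ (∀ z ∈ D, z ≠ d → x ∉ closedNbhd T z) := fun hall => hnp ⟨hxd, hall⟩
      push_neg at h2
      obtain ⟨z, hz, hzv, hxz⟩ := h2
      exact ⟨z, Finset.mem_erase.mpr ⟨hzv, hz⟩, hxz⟩
    · exact ⟨d, Finset.mem_erase.mpr ⟨hdv, hd⟩, hxd⟩
  have h1 := hD.2 _ hdom
  have h2 := Finset.card_erase_lt_of_mem hv
  omega

lemma swap_minDom {D : Finset V} (hD : isMinDomSet T D) {u w : V} (hu : u ∈ D)
    (hw : w ∉ D) (huw : T.Adj u w) (hsub : privN T D u ⊆ closedNbhd T w) :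
    isMinDomSet T ((D \ {u}) ∪ {w}) := by
  have hdom : isDomSet T ((D \ {u}) ∪ {w}) := by
    intro x
    by_cases hx : ∃ z ∈ D, z ≠ u ∧ x ∈ closedNbhd T z
    · obtain ⟨z, hz, hzu, hxz⟩ := hx
      exact ⟨z, Finset.mem_union_left _ (Finset.mem_sdiff.mpr ⟨hz, by simp [hzu]⟩), hxz⟩
    · push_neg at hx
      obtain ⟨d, hd, hxd⟩ := hD.1 x
      have hdu : d = u := by
        by_contra hne
        exact (hx d hd hne) hxd
      subst hdu
      have hpriv : x ∈ privN T D d := ⟨hxd, fun z hz hzu => hx z hz hzu⟩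
      exact ⟨w, Finset.mem_union_right _ (Finset.mem_singleton_self w), hsub hpriv⟩
  have hcard : ((D \ {u}) ∪ {w}).card ≤ D.card := by
    have h0 : D \ {u} = D.erase u := by rw [Finset.erase_eq]
    have h1 : (D \ {u}).card = D.card - 1 := by rw [h0, Finset.card_erase_of_mem hu]
    have h2 := Finset.card_union_le (D \ {u}) ({w} : Finset V)
    have h3 : 1 ≤ D.card := Finset.card_pos.mpr ⟨u, hu⟩
    simp only [Finset.card_singleton] at h2
    omega
  refine ⟨hdom, fun E hE => ?_⟩
  have h1 := hD.2 _ hdom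
  have h2 := hD.2 _ hE
  omega

lemma no_triangle (hT : T.IsTree) {a b c : V} (hab : T.Adj a b) (hbc : T.Adj b c)
    (hac : T.Adj a c) : False := by
  have hu := SimpleGraph.isAcyclic_iff_path_unique.mp hT.IsAcyclic
  have h := hu (SimpleGraph.Path.singleton hab)
    ⟨Walk.cons hac (Walk.cons hbc.symm Walk.nil), by
      simp [Walk.isPath_def, hac.ne, hab.ne, hbc.ne']⟩
  have hlen := congrArg (fun p : T.Path a b => (p : T.Walk a b).length) h
  simp [SimpleGraph.Path.singleton] at hlen

lemma exists_adj_of_tree (hT : T.IsTree) (h2 : 2 ≤ Fintype.card V) (v : V) :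
    ∃ w, T.Adj v w := by
  obtain ⟨u, hu⟩ := Fintype.exists_ne_of_one_lt_card (by omega) v
  obtain ⟨p⟩ := hT.isConnected.preconnected v u
  cases p with
  | nil => exact absurd rfl hu.symm
  | cons h _ => exact ⟨_, h⟩

lemma swap_left_eq {D : Finset V} {u w u₀ v₀ : V} (hu : u ∈ D) (hu₀ : u₀ ∈ D)
    (huw : u ≠ w) (hu₀v₀ : u₀ ≠ v₀)
    (h : (D \ {u}) ∪ {w} = (D \ {u₀}) ∪ {v₀}) : u = u₀ := by
  by_contra hne
  have hu_mem : u ∈ (D \ {u₀}) ∪ {v₀} :=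
    Finset.mem_union_left _ (Finset.mem_sdiff.mpr ⟨hu, by simp [hne]⟩)
  rw [← h] at hu_mem
  simp [huw] at hu_mem

lemma adj_structure {D : Finset V} (hD : isMinDomSet T D) (E : Finset V)
    (hE : isMinDomSet T E) (hne : E ≠ D)
    (hsw : ∃ u v : V, T.Adj u v ∧ (E = (D \ {u}) ∪ {v} ∨ D = (E \ {u}) ∪ {v})) :
    ∃ u₀ v₀, u₀ ∈ D ∧ v₀ ∉ D ∧ T.Adj u₀ v₀ ∧ privN T D u₀ ⊆ closedNbhd T v₀ ∧
      E = (D \ {u₀}) ∪ {v₀} := by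
  have hcard : E.card = D.card := le_antisymm (hE.2 _ hD.1) (hD.2 _ hE.1)
  obtain ⟨u, v, huv, hcase⟩ := hsw
  have main : ∀ (A B : Finset V), B.card = A.card → B ≠ A → B = (A \ {u}) ∪ {v} →
      u ∈ A ∧ v ∉ A := by
    intro A B hc hne hBe
    have huA : u ∈ A := by
      by_contra hu
      have h0 : A \ {u} = A := by
        rw [Finset.sdiff_eq_self_iff_disjoint]
        simp [hu]
      rw [h0] at hBe
      by_cases hv : v ∈ A
      · rw [Finset.union_eq_left.mpr (Finset.singleton_subset_iff.mpr hv)] at hBe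
        exact hne hBe
      · have : B.card = A.card + 1 := by
          rw [hBe, Finset.card_union_of_disjoint (by simp [hv])]
          simp
        omega
    refine ⟨huA, ?_⟩
    by_contra hv
    have hvu : v ≠ u := huv.ne'
    have hvmem : v ∈ A \ {u} := Finset.mem_sdiff.mpr ⟨hv, by simp [hvu]⟩
    rw [Finset.union_eq_left.mpr (Finset.singleton_subset_iff.mpr hvmem)] at hBe
    have : (A \ {u}).card = A.card - 1 := by
      rw [← Finset.erase_eq, Finset.card_erase_of_mem huA]
    have h1 : 1 ≤ A.card := Finset.card_pos.mpr ⟨u, huA⟩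
    rw [hBe] at hc
    omega
  rcases hcase with hEeq | hDeq
  · obtain ⟨huD, hvD⟩ := main D E hcard hne hEeq
    refine ⟨u, v, huD, hvD, huv, ?_, hEeq⟩
    intro x hx
    obtain ⟨d, hd, hxd⟩ := hE.1 x
    rw [hEeq] at hd
    rcases Finset.mem_union.mp hd with h | h
    · obtain ⟨hdD, hdu⟩ := Finset.mem_sdiff.mp h
      exact absurd hxd (hx.2 d hdD (by simpa using hdu))
    · rwa [Finset.mem_singleton.mp h] at hxd
  · obtain ⟨huE, hvE⟩ := main E D hcard.symm (Ne.symm hne) hDeq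
    have hvD : v ∈ D := by rw [hDeq]; exact Finset.mem_union_right _ (Finset.mem_singleton_self v)
    have huD : u ∉ D := by
      rw [hDeq]
      simp [huv.ne]
    have hEeq : E = (D \ {v}) ∪ {u} := by
      ext x
      constructor
      · intro hx
        by_cases hxu : x = u
        · subst hxu; exact Finset.mem_union_right _ (Finset.mem_singleton_self x)
        · have hxD : x ∈ D := by
            rw [hDeq]
            exact Finset.mem_union_left _ (Finset.mem_sdiff.mpr ⟨hx, by simp [hxu]⟩)
          have hxv : x ≠ v := fun h => hvE (h ▸ hx)
          exact Finset.mem_union_left _ (Finset.mem_sdiff.mpr ⟨hxD, by simp [hxv]⟩)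
      · intro hx
        rcases Finset.mem_union.mp hx with h | h
        · obtain ⟨hxD, hxv⟩ := Finset.mem_sdiff.mp h
          rw [hDeq] at hxD
          rcases Finset.mem_union.mp hxD with h2 | h2
          · exact (Finset.mem_sdiff.mp h2).1
          · exact absurd (Finset.mem_singleton.mp h2) (by simpa using hxv)
        · rw [Finset.mem_singleton.mp h]; exact huE
    refine ⟨v, u, hvD, huD, huv.symm, ?_, hEeq⟩
    intro x hx
    obtain ⟨d, hd, hxd⟩ := hE.1 x
    rw [hEeq] at hd
    rcases Finset.mem_union.mp hd with h | h
    · obtain ⟨hdD, hdv⟩ := Finset.mem_sdiff.mp h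
      exact absurd hxd (hx.2 d hdD (by simpa using hdv))
    · rwa [Finset.mem_singleton.mp h] at hxd

end Aux

section Main
variable {V : Type} [Fintype V] [DecidableEq V] {T : SimpleGraph V}

lemma swap_adj {D : Finset V} (hD : isMinDomSet T D) {u w : V} (hu : u ∈ D)
    (hw : w ∉ D) (huw : T.Adj u w) (hsub : privN T D u ⊆ closedNbhd T w) :
    (gammaGraph T).Adj ⟨D, hD⟩ ⟨(D \ {u}) ∪ {w}, swap_minDom hD hu hw huw hsub⟩ := by
  refine ⟨?_, u, w, huw, Or.inl rfl⟩
  intro h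
  have h2 : D = (D \ {u}) ∪ {w} := congrArg Subtype.val h
  have : u ∈ (D \ {u}) ∪ {w} := h2 ▸ hu
  simp [huw.ne] at this

end Main

theorem stmt10 {V : Type} [Fintype V] [DecidableEq V] (T : SimpleGraph V) (hT : T.IsTree)
    (hcard : 3 ≤ Fintype.card V)
    (D : Finset V) (hD : isMinDomSet T D)
    (hleaf : ((gammaGraph T).neighborSet ⟨D, hD⟩).ncard = 1) :
    ∃! v : V, v ∈ D ∧ (privN T D v \ {v}).ncard < 2 ∧
      ((privN T D v \ {v}).ncard = 1 ∨
        ((T.neighborSet v).ncard = 1 ∧ v ∈ privN T D v)) := by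
  obtain ⟨E₀, hE₀⟩ := Set.ncard_eq_one.mp hleaf
  have hE₀adj : (gammaGraph T).Adj ⟨D, hD⟩ E₀ := by
    have : E₀ ∈ (gammaGraph T).neighborSet ⟨D, hD⟩ := by rw [hE₀]; exact rfl
    exact this
  obtain ⟨hne₀, hsw₀⟩ := hE₀adj
  have hneF : E₀.1 ≠ D := fun h => hne₀ (Subtype.ext h).symm
  obtain ⟨u₀, v₀, hu₀D, hv₀D, hadj₀, hsub₀, hE₀eq⟩ :=
    adj_structure hD E₀.1 E₀.2 hneF hsw₀
  -- key: any valid swap pair equals (u₀, v₀)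
  have key : ∀ u w, u ∈ D → w ∉ D → T.Adj u w → privN T D u ⊆ closedNbhd T w →
      u = u₀ ∧ w = v₀ := by
    intro u w hu hw huw hsub
    have hadj := swap_adj hD hu hw huw hsub
    have hmem : (⟨(D \ {u}) ∪ {w}, swap_minDom hD hu hw huw hsub⟩ :
        {D : Finset V // isMinDomSet T D}) ∈ (gammaGraph T).neighborSet ⟨D, hD⟩ := hadj
    rw [hE₀] at hmem
    have heq : (D \ {u}) ∪ {w} = (D \ {u₀}) ∪ {v₀} := by
      have h2 := congrArg Subtype.val (Set.mem_singleton_iff.mp hmem)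
      rw [← hE₀eq]
      exact h2
    have hueq := swap_left_eq hu hu₀D huw.ne hadj₀.ne heq
    refine ⟨hueq, ?_⟩
    subst hueq
    have hwmem : w ∈ (D \ {u}) ∪ {w} := Finset.mem_union_right _ (Finset.mem_singleton_self w)
    rw [heq] at hwmem
    rcases Finset.mem_union.mp hwmem with h | h
    · exact absurd (Finset.mem_sdiff.mp h).1 hw
    · exact Finset.mem_singleton.mp h
  -- u₀ has < 2 external private neighbours
  have hsubs : privN T D u₀ \ {u₀} ⊆ {v₀} := by
    intro y hy
    obtain ⟨hyp, hyne⟩ := hy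
    rw [Set.mem_singleton_iff] at hyne ⊢
    have hadj_uy : T.Adj u₀ y := by
      rcases hyp.1 with h | h
      · exact absurd h hyne
      · exact h
    rcases hsub₀ hyp with h | h
    · exact h
    · exact absurd hadj_uy (fun hc => no_triangle hT hadj₀ h hc)
  have hlt : (privN T D u₀ \ {u₀}).ncard < 2 := by
    have := Set.ncard_le_ncard hsubs (Set.toFinite _)
    simp only [Set.ncard_singleton] at this
    omega
  have hmain : (privN T D u₀ \ {u₀}).ncard = 1 ∨
      ((T.neighborSet u₀).ncard = 1 ∧ u₀ ∈ privN T D u₀) := by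
    rcases (by omega : (privN T D u₀ \ {u₀}).ncard = 0 ∨ (privN T D u₀ \ {u₀}).ncard = 1) with h0 | h1
    · right
      have hempty : privN T D u₀ \ {u₀} = ∅ := Set.ncard_eq_zero (Set.toFinite _) |>.mp h0
      have hsub1 : privN T D u₀ ⊆ {u₀} := Set.diff_eq_empty.mp hempty
      obtain ⟨x, hx⟩ := privN_nonempty hD hu₀D
      have hxu : x = u₀ := hsub1 hx
      subst hxu
      refine ⟨?_, hx⟩
      have hns : T.neighborSet x = {v₀} := by
        ext w
        simp only [SimpleGraph.mem_neighborSet, Set.mem_singleton_iff]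
        constructor
        · intro hxw
          have hwD : w ∉ D := by
            intro hwD
            exact hx.2 w hwD hxw.ne' (Or.inr hxw.symm)
          have hsubw : privN T D x ⊆ closedNbhd T w := by
            intro y hy
            have : y = x := hsub1 hy
            subst this
            exact Or.inr hxw.symm
          exact (key x w hu₀D hwD hxw hsubw).2
        · intro h; subst h; exact hadj₀
      rw [hns, Set.ncard_singleton]
    · left; exact h1
  refine ⟨u₀, ⟨hu₀D, hlt, hmain⟩, ?_⟩
  rintro v ⟨hvD, hvlt, -⟩
  by_contra hvne
  rcases (by omega : (privN T D v \ {v}).ncard = 0 ∨ (privN T D v \ {v}).ncard = 1) with h0 | h1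
  · -- privN v = {v}
    have hempty : privN T D v \ {v} = ∅ := Set.ncard_eq_zero (Set.toFinite _) |>.mp h0
    have hsub1 : privN T D v ⊆ {v} := Set.diff_eq_empty.mp hempty
    obtain ⟨x, hx⟩ := privN_nonempty hD hvD
    have hxv : x = v := hsub1 hx
    subst hxv
    obtain ⟨w, hxw⟩ := exists_adj_of_tree hT (by omega) x
    have hwD : w ∉ D := fun hwD => hx.2 w hwD hxw.ne' (Or.inr hxw.symm)
    have hsubw : privN T D x ⊆ closedNbhd T w := by
      intro y hy
      have : y = x := hsub1 hy
      subst this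
      exact Or.inr hxw.symm
    exact hvne (key x w hvD hwD hxw hsubw).1
  · obtain ⟨w, hw⟩ := Set.ncard_eq_one.mp h1
    have hwmem : w ∈ privN T D v \ {v} := by rw [hw]; exact rfl
    obtain ⟨hwp, hwne⟩ := hwmem
    rw [Set.mem_singleton_iff] at hwne
    have hadj_vw : T.Adj v w := by
      rcases hwp.1 with h | h
      · exact absurd h hwne
      · exact h
    have hwD : w ∉ D := fun hwD => hwp.2 w hwD hwne (Or.inl rfl)
    have hsubw : privN T D v ⊆ closedNbhd T w := by
      intro y hy
      by_cases hyv : y = v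
      · subst hyv; exact Or.inr hadj_vw.symm
      · have : y ∈ privN T D v \ {v} := ⟨hy, hyv⟩
        rw [hw, Set.mem_singleton_iff] at this
        subst this
        exact Or.inl rfl
    exact hvne (key v w hvD hwD hadj_vw hsubw).1
end

section
/- The graph H obtained from two disjoint paths on three vertices a₀a₁a₂ and b₀b₁b₂ by adding the edge a₁b₁ (i.e., two stars K_{1,3} sharing centres joined by an edge; equivalently, the 'H-graph': two adjacent vertices each with two pendant leaves) is not isomorphic to the γ-graph of any tree. -/
open SimpleGraph Finset

section Aux
variable {V : Type} [Fintype V] [DecidableEq V] {T : SimpleGraph V}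

lemma mem_closed_self (T : SimpleGraph V) (x : V) : x ∈ closedNbhd T x := Or.inl rfl

lemma adj_mem_closed {x y : V} (h : T.Adj x y) : y ∈ closedNbhd T x := Or.inr h

lemma tree_tri (hT : T.IsTree) {a b c : V} (h1 : T.Adj a b) (h2 : T.Adj b c)
    (h3 : T.Adj a c) : False := by
  have hpu := isAcyclic_iff_path_unique.mp hT.IsAcyclic
  have hp1 : (Walk.cons h3 Walk.nil : T.Walk a c).IsPath := by
    rw [Walk.isPath_def]
    simp only [Walk.support_cons, Walk.support_nil, List.nodup_cons, List.mem_cons,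
      List.mem_singleton, List.not_mem_nil, List.nodup_nil, and_true, not_or, or_false, not_false_iff,
      List.nodup_singleton]
    exact h3.ne
  have hp2 : (Walk.cons h1 (Walk.cons h2 Walk.nil) : T.Walk a c).IsPath := by
    rw [Walk.isPath_def]
    simp only [Walk.support_cons, Walk.support_nil, List.nodup_cons, List.mem_cons,
      List.mem_singleton, List.not_mem_nil, List.nodup_nil, and_true, not_or, or_false, not_false_iff,
      List.nodup_singleton]
    exact ⟨⟨h1.ne, h3.ne⟩, h2.ne⟩
  have heq := hpu ⟨_, hp1⟩ ⟨_, hp2⟩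
  have hb : b ∈ (Walk.cons h3 Walk.nil : T.Walk a c).support := by
    have : (⟨_, hp1⟩ : T.Path a c).1.support = (⟨_, hp2⟩ : T.Path a c).1.support := by
      rw [heq]
    rw [this]
    simp only [Walk.support_cons, Walk.support_nil, List.mem_cons, List.mem_singleton]
    tauto
  simp only [Walk.support_cons, Walk.support_nil, List.mem_cons, List.mem_singleton,
    List.not_mem_nil, or_false] at hb
  rcases hb with h | h
  · exact h1.ne h.symm
  · exact h2.ne h

lemma tree_c4 (hT : T.IsTree) {a b c d : V} (hac : a ≠ c) (hbd : b ≠ d)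
    (h1 : T.Adj a b) (h2 : T.Adj b c) (h3 : T.Adj a d) (h4 : T.Adj d c) : False := by
  have hpu := isAcyclic_iff_path_unique.mp hT.IsAcyclic
  have hp1 : (Walk.cons h1 (Walk.cons h2 Walk.nil) : T.Walk a c).IsPath := by
    rw [Walk.isPath_def]
    simp only [Walk.support_cons, Walk.support_nil, List.nodup_cons, List.mem_cons,
      List.mem_singleton, List.not_mem_nil, List.nodup_nil, and_true, not_or, or_false, not_false_iff,
      List.nodup_singleton]
    exact ⟨⟨h1.ne, hac⟩, h2.ne⟩
  have hp2 : (Walk.cons h3 (Walk.cons h4 Walk.nil) : T.Walk a c).IsPath := by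
    rw [Walk.isPath_def]
    simp only [Walk.support_cons, Walk.support_nil, List.nodup_cons, List.mem_cons,
      List.mem_singleton, List.not_mem_nil, List.nodup_nil, and_true, not_or, or_false, not_false_iff,
      List.nodup_singleton]
    exact ⟨⟨h3.ne, hac⟩, h4.ne⟩
  have heq := hpu ⟨_, hp1⟩ ⟨_, hp2⟩
  have hb : b ∈ (Walk.cons h3 (Walk.cons h4 Walk.nil) : T.Walk a c).support := by
    have : (⟨_, hp1⟩ : T.Path a c).1.support = (⟨_, hp2⟩ : T.Path a c).1.support := by
      rw [heq]
    rw [← this]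
    simp only [Walk.support_cons, Walk.support_nil, List.mem_cons, List.mem_singleton]
    tauto
  simp only [Walk.support_cons, Walk.support_nil, List.mem_cons, List.mem_singleton,
    List.not_mem_nil, or_false] at hb
  rcases hb with h | h | h
  · exact h1.ne h.symm
  · exact hbd h
  · exact h2.ne h

lemma tree_c6 (hT : T.IsTree) {u1 u2 u3 w12 w23 w13 : V}
    (hu12 : u1 ≠ u2) (hu13 : u1 ≠ u3) (hu23 : u2 ≠ u3)
    (hwa : w12 ≠ w23) (hwb : w12 ≠ w13) (hwc : w23 ≠ w13)
    (hx1 : w12 ≠ u3) (hx2 : w23 ≠ u1) (hx3 : w13 ≠ u2)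
    (h1 : T.Adj u1 w12) (h2 : T.Adj u2 w12) (h3 : T.Adj u2 w23) (h4 : T.Adj u3 w23)
    (h5 : T.Adj u3 w13) (h6 : T.Adj u1 w13) : False := by
  have hpu := isAcyclic_iff_path_unique.mp hT.IsAcyclic
  have hp1 : (Walk.cons h1 (Walk.cons h2.symm (Walk.cons h3 (Walk.cons h4.symm Walk.nil))) :
      T.Walk u1 u3).IsPath := by
    rw [Walk.isPath_def]
    simp only [Walk.support_cons, Walk.support_nil, List.nodup_cons, List.mem_cons,
      List.mem_singleton, List.not_mem_nil, List.nodup_nil, and_true, not_or, or_false, not_false_iff,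
      List.nodup_singleton]
    exact ⟨⟨h1.ne, hu12, hx2.symm, hu13⟩, ⟨h2.ne.symm, hwa, hx1⟩, ⟨h3.ne, hu23⟩, h4.ne.symm⟩
  have hp2 : (Walk.cons h6 (Walk.cons h5.symm Walk.nil) : T.Walk u1 u3).IsPath := by
    rw [Walk.isPath_def]
    simp only [Walk.support_cons, Walk.support_nil, List.nodup_cons, List.mem_cons,
      List.mem_singleton, List.not_mem_nil, List.nodup_nil, and_true, not_or, or_false, not_false_iff,
      List.nodup_singleton]
    exact ⟨⟨h6.ne, hu13⟩, h5.ne.symm⟩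
  have heq := hpu ⟨_, hp1⟩ ⟨_, hp2⟩
  have hb : w12 ∈ (Walk.cons h6 (Walk.cons h5.symm Walk.nil) : T.Walk u1 u3).support := by
    have : (⟨_, hp1⟩ : T.Path u1 u3).1.support = (⟨_, hp2⟩ : T.Path u1 u3).1.support := by
      rw [heq]
    rw [← this]
    simp only [Walk.support_cons, Walk.support_nil, List.mem_cons, List.mem_singleton]
    tauto
  simp only [Walk.support_cons, Walk.support_nil, List.mem_cons, List.mem_singleton,
    List.not_mem_nil, or_false] at hb
  rcases hb with h | h | h
  · exact h1.ne h.symm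
  · exact hwb h
  · exact hx1 h

lemma minDom_card_eq {D1 D2 : Finset V} (h1 : isMinDomSet T D1) (h2 : isMinDomSet T D2) :
    D1.card = D2.card :=
  le_antisymm (h1.2 _ h2.1) (h2.2 _ h1.1)

lemma swap_facts {D E : Finset V} {u v : V} (hE : E = (D \ {u}) ∪ {v})
    (hcard : E.card = D.card) (hne : E ≠ D) (huv : u ≠ v) :
    u ∈ D ∧ v ∉ D ∧ D = (E \ {v}) ∪ {u} := by
  by_cases hu : u ∈ D
  · by_cases hv : v ∈ D
    · exfalso
      have hvd : v ∈ D \ {u} := Finset.mem_sdiff.mpr ⟨hv, by simp [Ne.symm huv]⟩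
      have hED : E = D \ {u} := by
        rw [hE, Finset.union_eq_left]
        simpa using hvd
      have : (D \ {u}).card < D.card := Finset.card_lt_card (Finset.ssubset_iff_of_subset
        (Finset.sdiff_subset)|>.mpr ⟨u, hu, by simp⟩)
      rw [hED] at hcard
      omega
    · refine ⟨hu, hv, ?_⟩
      subst hE
      ext x
      simp only [Finset.mem_union, Finset.mem_sdiff, Finset.mem_singleton]
      constructor
      · intro hx
        by_cases hxu : x = u
        · exact Or.inr hxu
        · exact Or.inl ⟨Or.inl ⟨hx, hxu⟩, fun hxv => hv (hxv ▸ hx)⟩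
      · rintro (⟨(⟨hx, _⟩ | hx), _⟩ | hx)
        · exact hx
        · exact absurd hx (by tauto)
        · exact hx ▸ hu
  · exfalso
    have hDu : D \ {u} = D := by
      apply Finset.sdiff_eq_self_of_disjoint
      simp [hu]
    rw [hDu] at hE
    by_cases hv : v ∈ D
    · apply hne
      rw [hE, Finset.union_eq_left]
      simpa using hv
    · have : E.card = D.card + 1 := by
        rw [hE, Finset.union_comm, ← Finset.insert_eq, Finset.card_insert_of_notMem hv]
      omega

lemma adj_normalize {D E : {X : Finset V // isMinDomSet T X}}
    (h : (gammaGraph T).Adj D E) :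
    ∃ u v, T.Adj u v ∧ u ∈ D.1 ∧ v ∉ D.1 ∧ u ∉ E.1 ∧ v ∈ E.1 ∧
      E.1 = (D.1 \ {u}) ∪ {v} ∧ D.1 = (E.1 \ {v}) ∪ {u} := by
  obtain ⟨hne, u, v, huv, hcase⟩ := h
  have hne1 : E.1 ≠ D.1 := fun hh => hne (Subtype.ext hh.symm)
  rcases hcase with hE | hD
  · have hc : E.1.card = D.1.card := minDom_card_eq E.2 D.2
    obtain ⟨hu, hv, hrev⟩ := swap_facts hE hc hne1 huv.ne
    refine ⟨u, v, huv, hu, hv, ?_, ?_, hE, hrev⟩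
    · rw [hE]
      simp [huv.ne]
    · rw [hE]
      simp
  · have hc : D.1.card = E.1.card := minDom_card_eq D.2 E.2
    obtain ⟨hu, hv, hrev⟩ := swap_facts hD hc hne1.symm huv.ne
    refine ⟨v, u, huv.symm, ?_, ?_, hv, hu, hrev, hD⟩
    · rw [hD]
      simp
    · rw [hD]
      simp [huv.ne]

lemma swap_pair_eq {D : Finset V} {u v u' v' : V} (hu : u ∈ D) (hv : v ∉ D)
    (hu' : u' ∈ D) (hv' : v' ∉ D) (h : (D \ {u}) ∪ {v} = (D \ {u'}) ∪ {v'}) :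
    u = u' ∧ v = v' := by
  have hvv : v = v' := by
    have : v ∈ (D \ {u'}) ∪ {v'} := by rw [← h]; simp
    simp only [Finset.mem_union, Finset.mem_sdiff, Finset.mem_singleton] at this
    rcases this with ⟨hvD, _⟩ | hvv
    · exact absurd hvD hv
    · exact hvv
  refine ⟨?_, hvv⟩
  by_contra huu
  have hnot : u ∉ (D \ {u}) ∪ {v} := by
    intro hmem
    rcases Finset.mem_union.mp hmem with hh | hh
    · exact (Finset.mem_sdiff.mp hh).2 (Finset.mem_singleton.mpr rfl)
    · exact hv ((Finset.mem_singleton.mp hh) ▸ hu)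
  rw [h] at hnot
  apply hnot
  simp only [Finset.mem_union, Finset.mem_sdiff, Finset.mem_singleton]
  exact Or.inl ⟨hu, huu⟩

lemma pn_nonempty {D : Finset V} (hD : isMinDomSet T D) {u : V} (hu : u ∈ D) :
    ∃ y, y ∈ privN T D u := by
  by_contra hcon
  push_neg at hcon
  have hdom : isDomSet T (D.erase u) := by
    intro x
    obtain ⟨d, hd, hx⟩ := hD.1 x
    by_cases hdu : d = u
    · subst hdu
      have := hcon x
      simp only [privN, Set.mem_setOf_eq, not_and, not_forall] at this
      obtain ⟨z, hz, hzu, hxz⟩ := this hx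
      rw [not_not] at hxz
      exact ⟨z, Finset.mem_erase.mpr ⟨hzu, hz⟩, hxz⟩
    · exact ⟨d, Finset.mem_erase.mpr ⟨hdu, hd⟩, hx⟩
  have := hD.2 _ hdom
  have hlt : (D.erase u).card < D.card := Finset.card_erase_lt_of_mem hu
  omega

lemma pn_subset_of_dom (hT : T.IsTree) {D : Finset V} {u v : V} (huv : T.Adj u v)
    (hdom : isDomSet T ((D \ {u}) ∪ {v})) :
    ∀ y ∈ privN T D u, y = u ∨ y = v := by
  intro y hy
  obtain ⟨hy1, hy2⟩ := hy
  obtain ⟨d, hd, hyd⟩ := hdom y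
  simp only [Finset.mem_union, Finset.mem_sdiff, Finset.mem_singleton] at hd
  rcases hd with ⟨hdD, hdu⟩ | hdv
  · exact absurd hyd (hy2 d hdD hdu)
  · subst hdv
    by_cases hyu : y = u
    · exact Or.inl hyu
    · by_cases hyv : y = d
      · exact Or.inr hyv
      · exfalso
        have hady : T.Adj u y := by
          rcases hy1 with h | h
          · exact absurd h hyu
          · exact h
        have hady2 : T.Adj d y := by
          rcases hyd with h | h
          · exact absurd h hyv
          · exact h
        exact tree_tri hT huv hady2 hady

lemma dom_of_pn {D : Finset V} (hD : isDomSet T D) {u v : V} (huv : T.Adj u v)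
    (hpn : ∀ y ∈ privN T D u, y = u ∨ y = v) :
    isDomSet T ((D \ {u}) ∪ {v}) := by
  intro x
  obtain ⟨d, hd, hx⟩ := hD x
  by_cases hdu : d = u
  · rw [hdu] at hx
    by_cases hex : ∃ z ∈ D, z ≠ u ∧ x ∈ closedNbhd T z
    · obtain ⟨z, hz, hzu, hxz⟩ := hex
      exact ⟨z, by simp [Finset.mem_sdiff, hz, hzu], hxz⟩
    · push_neg at hex
      have hxpn : x ∈ privN T D u := ⟨hx, fun z hz hzu hxz => hex z hz hzu hxz⟩
      rcases hpn x hxpn with h | h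
      · refine ⟨v, by simp, ?_⟩
        rw [h]
        exact Or.inr huv.symm
      · refine ⟨v, by simp, ?_⟩
        rw [h]
        exact Or.inl rfl
  · exact ⟨d, by simp [Finset.mem_sdiff, hd, hdu], hx⟩

lemma swap_neighbor {D : {X : Finset V // isMinDomSet T X}} {u v : V}
    (hu : u ∈ D.1) (hv : v ∉ D.1) (huv : T.Adj u v)
    (hdom : isDomSet T ((D.1 \ {u}) ∪ {v})) :
    ∃ E : {X : Finset V // isMinDomSet T X}, (gammaGraph T).Adj D E ∧
      E.1 = (D.1 \ {u}) ∪ {v} := by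
  have hcard : ((D.1 \ {u}) ∪ {v}).card = D.1.card := by
    have h1 : ((D.1 \ {u}) ∪ {v}).card = (D.1 \ {u}).card + 1 := by
      rw [Finset.union_comm, ← Finset.insert_eq, Finset.card_insert_of_notMem (by simp [Finset.mem_sdiff, hv])]
    have h2 : (D.1 \ {u}).card = D.1.card - 1 := by
      rw [Finset.card_sdiff_of_subset (by simpa using hu)]
      simp
    have h3 : 1 ≤ D.1.card := Finset.card_pos.mpr ⟨u, hu⟩
    omega
  have hmin : isMinDomSet T ((D.1 \ {u}) ∪ {v}) :=
    ⟨hdom, fun D' hD' => hcard ▸ D.2.2 D' hD'⟩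
  refine ⟨⟨_, hmin⟩, ⟨?_, u, v, huv, Or.inl rfl⟩, rfl⟩
  intro hEq
  have : v ∈ D.1 := by
    have : v ∈ (⟨(D.1 \ {u}) ∪ {v}, hmin⟩ : {X : Finset V // isMinDomSet T X}).1 := by simp
    rw [← hEq] at this
    exact this
  exact hv this

lemma noshare (hT : T.IsTree) {D E1 E2 : {X : Finset V // isMinDomSet T X}} (h12 : E1 ≠ E2)
    {u1 u2 v : V} (hs1 : E1.1 = (D.1 \ {u1}) ∪ {v}) (hs2 : E2.1 = (D.1 \ {u2}) ∪ {v})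
    (hu1 : u1 ∈ D.1) (hu2 : u2 ∈ D.1) (hv : v ∉ D.1)
    (ha1 : T.Adj u1 v) (ha2 : T.Adj u2 v) : False := by
  have hne12 : u1 ≠ u2 := by
    intro h
    exact h12 (Subtype.ext (hs1.trans (h ▸ hs2.symm)))
  have hpn2 : ∀ y ∈ privN T D.1 u2, y = u2 ∨ y = v :=
    pn_subset_of_dom hT ha2 (hs2 ▸ E2.2.1)
  have hu2E : u2 ∈ E1.1 := by
    rw [hs1]
    exact Finset.mem_union_left _ (Finset.mem_sdiff.mpr ⟨hu2, by simp [hne12.symm]⟩)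
  obtain ⟨y, hy1, hy2⟩ := pn_nonempty E1.2 hu2E
  have hvE1 : v ∈ E1.1 := by rw [hs1]; simp
  have hvu2 : v ≠ u2 := fun h => hv (h ▸ hu2)
  have hyv : y ∉ closedNbhd T v := hy2 v hvE1 hvu2
  have hyu1 : y ∈ closedNbhd T u1 := by
    by_cases hpnD : y ∈ privN T D.1 u2
    · exfalso
      rcases hpn2 y hpnD with h | h
      · rw [h] at hyv
        exact hyv (Or.inr ha2.symm)
      · rw [h] at hyv
        exact hyv (Or.inl rfl)
    · simp only [privN, Set.mem_setOf_eq, not_and, not_forall] at hpnD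
      obtain ⟨z, hz, hzu2, hyz⟩ := hpnD hy1
      rw [not_not] at hyz
      by_cases hzu1 : z = u1
      · exact hzu1 ▸ hyz
      · exfalso
        have hzE : z ∈ E1.1 := by
          rw [hs1]
          exact Finset.mem_union_left _ (Finset.mem_sdiff.mpr ⟨hz, by simp [hzu1]⟩)
        exact hy2 z hzE hzu2 hyz
  have hyv' : y ≠ v := fun h => hyv (h ▸ Or.inl rfl)
  rcases hy1 with hyu2 | hadj2
  · -- y = u2
    rcases hyu1 with h | h
    · exact hne12 (h.symm.trans hyu2)
    · -- Adj u1 y = Adj u1 u2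
      rw [hyu2] at h
      exact tree_tri hT h ha2 ha1
  · rcases hyu1 with h | h
    · -- y = u1 : Adj u2 u1
      rw [h] at hadj2
      exact tree_tri hT hadj2 ha1 ha2
    · exact tree_c4 hT hne12 hyv' h hadj2.symm ha1 ha2.symm

lemma interf {D E : {X : Finset V // isMinDomSet T X}} {u v u' v' : V} (hT : T.IsTree)
    (hs : E.1 = (D.1 \ {u}) ∪ {v}) (hu : u ∈ D.1) (hv : v ∉ D.1) (ha : T.Adj u v)
    (hu' : u' ∈ D.1) (hv' : v' ∉ D.1) (ha' : T.Adj u' v')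
    (hpn' : ∀ y ∈ privN T D.1 u', y = u' ∨ y = v')
    (hneu : u ≠ u') (hnev : v ≠ v')
    (hleaf : ∀ F, (gammaGraph T).Adj E F → F = D) :
    ∃ w, T.Adj u w ∧ T.Adj u' w ∧ w ∉ closedNbhd T v ∧ w ∉ closedNbhd T v' ∧
      ∀ z ∈ D.1, z ≠ u → z ≠ u' → w ∉ closedNbhd T z := by
  have hu'E : u' ∈ E.1 := by
    rw [hs]
    exact Finset.mem_union_left _ (Finset.mem_sdiff.mpr ⟨hu', by simp [hneu.symm]⟩)
  have hv'E : v' ∉ E.1 := by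
    rw [hs]
    simp only [Finset.mem_union, Finset.mem_sdiff, Finset.mem_singleton, not_or]
    exact ⟨fun hh => hv' hh.1, hnev.symm⟩
  have hvE : v ∈ E.1 := by rw [hs]; simp
  by_cases hdom : isDomSet T ((E.1 \ {u'}) ∪ {v'})
  · exfalso
    obtain ⟨X, adjX, hX⟩ := swap_neighbor hu'E hv'E ha' hdom
    have hXD := hleaf X adjX
    have hvX : v ∈ X.1 := by
      rw [hX]
      exact Finset.mem_union_left _ (Finset.mem_sdiff.mpr ⟨hvE, by
        simp only [Finset.mem_singleton]
        exact fun h => hv (by rw [h]; exact hu')⟩)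
    rw [hXD] at hvX
    exact hv hvX
  · unfold isDomSet at hdom
    push_neg at hdom
    obtain ⟨y, hy⟩ := hdom
    have hyv' : y ∉ closedNbhd T v' := hy v' (Finset.mem_union_right _ (by simp))
    have hyE : ∀ z ∈ E.1, z ≠ u' → y ∉ closedNbhd T z := fun z hz hzu =>
      hy z (Finset.mem_union_left _ (Finset.mem_sdiff.mpr ⟨hz, by simp [hzu]⟩))
    have hyv : y ∉ closedNbhd T v := hyE v hvE (fun h => hv (by rw [h]; exact hu'))
    have hyzD : ∀ z ∈ D.1, z ≠ u → z ≠ u' → y ∉ closedNbhd T z := fun z hz h1 h2 =>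
      hyE z (by rw [hs]; exact Finset.mem_union_left _ (Finset.mem_sdiff.mpr ⟨hz, by simp [h1]⟩)) h2
    have hyu' : y ∈ closedNbhd T u' := by
      by_contra hnot
      have hyN : y ∈ closedNbhd T u := by
        obtain ⟨d, hd, hyd⟩ := D.2.1 y
        by_cases hdu : d = u
        · exact hdu ▸ hyd
        · by_cases hdu' : d = u'
          · exact absurd (hdu' ▸ hyd) hnot
          · exact absurd hyd (hyzD d hd hdu hdu')
      have hypn : y ∈ privN T D.1 u := by
        refine ⟨hyN, fun z hz hzu => ?_⟩
        by_cases hzu' : z = u'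
        · rw [hzu']
          exact hnot
        · exact hyzD z hz hzu hzu'
      rcases pn_subset_of_dom hT ha (hs ▸ E.2.1) y hypn with h | h
      · rw [h] at hyv
        exact hyv (Or.inr ha.symm)
      · rw [h] at hyv
        exact hyv (Or.inl rfl)
    have hyu : y ∈ closedNbhd T u := by
      by_contra hnot
      have hypn : y ∈ privN T D.1 u' := by
        refine ⟨hyu', fun z hz hzu' => ?_⟩
        by_cases hzu : z = u
        · rw [hzu]
          exact hnot
        · exact hyzD z hz hzu hzu'
      rcases hpn' y hypn with h | h
      · rw [h] at hyv'
        exact hyv' (Or.inr ha'.symm)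
      · rw [h] at hyv'
        exact hyv' (Or.inl rfl)
    have hadju : T.Adj u y := by
      rcases hyu with h | h
      · exfalso
        rw [h] at hyv
        exact hyv (Or.inr ha.symm)
      · exact h
    have hadju' : T.Adj u' y := by
      rcases hyu' with h | h
      · exfalso
        rw [h] at hyv'
        exact hyv' (Or.inr ha'.symm)
      · exact h
    exact ⟨y, hadju, hadju', hyv, hyv', hyzD⟩

lemma side (hT : T.IsTree) {D E1 E2 E3 : {X : Finset V // isMinDomSet T X}}
    (h12 : E1 ≠ E2) (h13 : E1 ≠ E3) (h23 : E2 ≠ E3)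
    (a1 : (gammaGraph T).Adj D E1) (a2 : (gammaGraph T).Adj D E2)
    (hnb : ∀ F, (gammaGraph T).Adj D F → F = E1 ∨ F = E2 ∨ F = E3)
    (hl1 : ∀ F, (gammaGraph T).Adj E1 F → F = D)
    (hl2 : ∀ F, (gammaGraph T).Adj E2 F → F = D)
    {u3 v3 : V} (hu3 : u3 ∈ D.1) (hv3 : v3 ∉ D.1) (hadj3 : T.Adj u3 v3)
    (hs3 : E3.1 = (D.1 \ {u3}) ∪ {v3}) :
    u3 ∈ privN T D.1 u3 ∧ ∀ y ∈ privN T D.1 u3, y = u3 := by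
  obtain ⟨u1, v1, hadj1, hu1, hv1, -, -, hs1, -⟩ := adj_normalize a1
  obtain ⟨u2, v2, hadj2, hu2, hv2, -, -, hs2, -⟩ := adj_normalize a2
  have hpn1 : ∀ y ∈ privN T D.1 u1, y = u1 ∨ y = v1 :=
    pn_subset_of_dom hT hadj1 (hs1 ▸ E1.2.1)
  have hpn2 : ∀ y ∈ privN T D.1 u2, y = u2 ∨ y = v2 :=
    pn_subset_of_dom hT hadj2 (hs2 ▸ E2.2.1)
  have hpn3 : ∀ y ∈ privN T D.1 u3, y = u3 ∨ y = v3 :=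
    pn_subset_of_dom hT hadj3 (hs3 ▸ E3.2.1)
  have hv12 : v1 ≠ v2 := fun h =>
    noshare hT h12 hs1 (by rw [hs2, h]) hu1 hu2 hv1 hadj1 (by rw [h]; exact hadj2)
  have hv13 : v1 ≠ v3 := fun h =>
    noshare hT h13 hs1 (by rw [hs3, h]) hu1 hu3 hv1 hadj1 (by rw [h]; exact hadj3)
  have hv23 : v2 ≠ v3 := fun h =>
    noshare hT h23 hs2 (by rw [hs3, h]) hu2 hu3 hv2 hadj2 (by rw [h]; exact hadj3)
  have wnotD : ∀ w z1 z2, T.Adj z1 w → T.Adj z2 w →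
      (∀ z ∈ D.1, z ≠ z1 → z ≠ z2 → w ∉ closedNbhd T z) → w ∉ D.1 := by
    intro w z1 z2 hb1 hb2 hz hwD
    exact hz w hwD hb1.ne' hb2.ne' (Or.inl rfl)
  have mkswap : ∀ u0 w, u0 ∈ D.1 → T.Adj u0 w → w ∉ D.1 →
      (∀ y ∈ privN T D.1 u0, y = u0 ∨ y = w) →
      (u0 = u1 ∧ w = v1) ∨ (u0 = u2 ∧ w = v2) ∨ (u0 = u3 ∧ w = v3) := by
    intro u0 w hu0 hadj hwD hpnw
    obtain ⟨X, adjX, hX⟩ := swap_neighbor hu0 hwD hadj (dom_of_pn D.2.1 hadj hpnw)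
    rcases hnb X adjX with h | h | h
    · exact Or.inl (swap_pair_eq hu0 hwD hu1 hv1 (by rw [← hX, h, hs1]))
    · exact Or.inr (Or.inl (swap_pair_eq hu0 hwD hu2 hv2 (by rw [← hX, h, hs2])))
    · exact Or.inr (Or.inr (swap_pair_eq hu0 hwD hu3 hv3 (by rw [← hX, h, hs3])))
  by_cases e13 : u1 = u3
  · by_cases e23 : u2 = u3
    · -- pattern 1 : conclude
      have hsub : ∀ y ∈ privN T D.1 u3, y = u3 := by
        intro y hy
        by_contra hne
        rcases hpn1 y (by rw [e13]; exact hy) with h | h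
        · exact hne (h.trans e13)
        · rcases hpn2 y (by rw [e23]; exact hy) with h' | h'
          · exact hne (h'.trans e23)
          · exact hv12 (h.symm.trans h')
      obtain ⟨y, hy⟩ := pn_nonempty D.2 hu3
      have hyu := hsub y hy
      rw [hyu] at hy
      exact ⟨hy, hsub⟩
    · -- pattern 3a : u1 = u3 ≠ u2
      exfalso
      have pnC : ∀ y ∈ privN T D.1 u3, y = u3 := by
        intro y hy
        by_contra hne
        rcases hpn1 y (by rw [e13]; exact hy) with h | h
        · exact hne (h.trans e13)
        · rcases hpn3 y hy with h' | h'
          · exact hne h'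
          · exact hv13 (h.symm.trans h')
      have hneu12 : u1 ≠ u2 := fun h => e23 (h.symm.trans e13)
      obtain ⟨w, hw1, hw2, hwv1, hwv2, hwz⟩ :=
        interf hT hs1 hu1 hv1 hadj1 hu2 hv2 hadj2 hpn2 hneu12 hv12 hl1
      have hwD := wnotD w u1 u2 hw1 hw2 hwz
      have hAu2v3 : T.Adj u2 v3 := by
        rcases mkswap u3 w hu3 (e13 ▸ hw1) hwD
          (fun y hy => Or.inl (pnC y hy)) with ⟨h1, h2⟩ | ⟨h1, h2⟩ | ⟨h1, h2⟩
        · exact absurd (by rw [← h2]; exact Or.inl rfl : w ∈ closedNbhd T v1) hwv1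
        · exact absurd h1.symm e23
        · rw [← h2]
          exact hw2
      obtain ⟨w', hw1', hw2', hwv2', hwv3', hwz'⟩ :=
        interf hT hs2 hu2 hv2 hadj2 hu3 hv3 hadj3 hpn3 e23 hv23 hl2
      have hw'D := wnotD w' u2 u3 hw1' hw2' hwz'
      have hAu2v1 : T.Adj u2 v1 := by
        rcases mkswap u3 w' hu3 hw2' hw'D
          (fun y hy => Or.inl (pnC y hy)) with ⟨h1, h2⟩ | ⟨h1, h2⟩ | ⟨h1, h2⟩
        · rw [← h2]
          exact hw1'
        · exact absurd h1.symm e23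
        · exact absurd (by rw [← h2]; exact Or.inl rfl : w' ∈ closedNbhd T v3) hwv3'
      exact tree_c4 hT (fun h => e23 h.symm) hv13 (e13 ▸ hadj1) hAu2v1.symm hadj3 hAu2v3.symm
  · by_cases e23 : u2 = u3
    · -- pattern 3b : u2 = u3 ≠ u1
      exfalso
      have pnC : ∀ y ∈ privN T D.1 u3, y = u3 := by
        intro y hy
        by_contra hne
        rcases hpn2 y (by rw [e23]; exact hy) with h | h
        · exact hne (h.trans e23)
        · rcases hpn3 y hy with h' | h'
          · exact hne h'
          · exact hv23 (h.symm.trans h')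
      have hneu21 : u2 ≠ u1 := fun h => e13 (h.symm.trans e23)
      obtain ⟨w, hw1, hw2, hwv2, hwv1, hwz⟩ :=
        interf hT hs2 hu2 hv2 hadj2 hu1 hv1 hadj1 hpn1 hneu21 hv12.symm hl2
      have hwD := wnotD w u2 u1 hw1 hw2 hwz
      have hAu1v3 : T.Adj u1 v3 := by
        rcases mkswap u3 w hu3 (e23 ▸ hw1) hwD
          (fun y hy => Or.inl (pnC y hy)) with ⟨h1, h2⟩ | ⟨h1, h2⟩ | ⟨h1, h2⟩
        · exact absurd h1.symm e13
        · exact absurd (by rw [← h2]; exact Or.inl rfl : w ∈ closedNbhd T v2) hwv2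
        · rw [← h2]
          exact hw2
      obtain ⟨w', hw1', hw2', hwv1', hwv3', hwz'⟩ :=
        interf hT hs1 hu1 hv1 hadj1 hu3 hv3 hadj3 hpn3 e13 hv13 hl1
      have hw'D := wnotD w' u1 u3 hw1' hw2' hwz'
      have hAu1v2 : T.Adj u1 v2 := by
        rcases mkswap u3 w' hu3 hw2' hw'D
          (fun y hy => Or.inl (pnC y hy)) with ⟨h1, h2⟩ | ⟨h1, h2⟩ | ⟨h1, h2⟩
        · exact absurd (by rw [← h2]; exact Or.inl rfl : w' ∈ closedNbhd T v1) hwv1'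
        · rw [← h2]
          exact hw1'
        · exact absurd (by rw [← h2]; exact Or.inl rfl : w' ∈ closedNbhd T v3) hwv3'
      exact tree_c4 hT (fun h => e13 h.symm) hv23 (e23 ▸ hadj2) hAu1v2.symm hadj3 hAu1v3.symm
    · by_cases e12 : u1 = u2
      · -- pattern 2 : u1 = u2, both ≠ u3
        exfalso
        have pnA : ∀ y ∈ privN T D.1 u1, y = u1 := by
          intro y hy
          by_contra hne
          rcases hpn1 y hy with h | h
          · exact hne h
          · rcases hpn2 y (by rw [← e12]; exact hy) with h' | h'
            · exact hne (h'.trans e12.symm)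
            · exact hv12 (h.symm.trans h')
        obtain ⟨w, hw1, hw2, hwv1, hwv3, hwz⟩ :=
          interf hT hs1 hu1 hv1 hadj1 hu3 hv3 hadj3 hpn3 e13 hv13 hl1
        have hwD := wnotD w u1 u3 hw1 hw2 hwz
        have hAu3v2 : T.Adj u3 v2 := by
          rcases mkswap u1 w hu1 hw1 hwD
            (fun y hy => Or.inl (pnA y hy)) with ⟨h1, h2⟩ | ⟨h1, h2⟩ | ⟨h1, h2⟩
          · exact absurd (by rw [← h2]; exact Or.inl rfl : w ∈ closedNbhd T v1) hwv1
          · rw [← h2]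
            exact hw2
          · exact absurd h1 e13
        obtain ⟨w', hw1', hw2', hwv2', hwv3', hwz'⟩ :=
          interf hT hs2 hu2 hv2 hadj2 hu3 hv3 hadj3 hpn3 e23 hv23 hl2
        have hw'D := wnotD w' u2 u3 hw1' hw2' hwz'
        have pnA2 : ∀ y ∈ privN T D.1 u2, y = u2 := by
          intro y hy
          rw [← e12]
          exact pnA y (by rw [e12]; exact hy)
        have hAu3v1 : T.Adj u3 v1 := by
          rcases mkswap u2 w' hu2 hw1' hw'D
            (fun y hy => Or.inl (pnA2 y hy)) with ⟨h1, h2⟩ | ⟨h1, h2⟩ | ⟨h1, h2⟩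
          · rw [← h2]
            exact hw2'
          · exact absurd (by rw [← h2]; exact Or.inl rfl : w' ∈ closedNbhd T v2) hwv2'
          · exact absurd h1 e23
        exact tree_c4 hT e13 hv12 hadj1 hAu3v1.symm (by rw [e12]; exact hadj2) hAu3v2.symm
      · -- pattern 4 : all distinct
        exfalso
        obtain ⟨w12, ha12a, ha12b, hn12a, hn12b, hz12⟩ :=
          interf hT hs1 hu1 hv1 hadj1 hu2 hv2 hadj2 hpn2 e12 hv12 hl1
        obtain ⟨w13, ha13a, ha13b, hn13a, hn13b, hz13⟩ :=
          interf hT hs1 hu1 hv1 hadj1 hu3 hv3 hadj3 hpn3 e13 hv13 hl1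
        obtain ⟨w23, ha23a, ha23b, hn23a, hn23b, hz23⟩ :=
          interf hT hs2 hu2 hv2 hadj2 hu3 hv3 hadj3 hpn3 e23 hv23 hl2
        have hw12u3 : w12 ∉ closedNbhd T u3 :=
          hz12 u3 hu3 (fun h => e13 h.symm) (fun h => e23 h.symm)
        have hw23u1 : w23 ∉ closedNbhd T u1 := hz23 u1 hu1 e12 e13
        have hw13u2 : w13 ∉ closedNbhd T u2 :=
          hz13 u2 hu2 (fun h => e12 h.symm) e23
        have hwa : w12 ≠ w23 := fun h => hw12u3 (by rw [h]; exact Or.inr ha23b)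
        have hwb : w12 ≠ w13 := fun h => hw12u3 (by rw [h]; exact Or.inr ha13b)
        have hwc : w23 ≠ w13 := fun h => hw13u2 (by rw [← h]; exact Or.inr ha23a)
        have hx1 : w12 ≠ u3 := fun h => hw12u3 (by rw [h]; exact Or.inl rfl)
        have hx2 : w23 ≠ u1 := fun h => hw23u1 (by rw [h]; exact Or.inl rfl)
        have hx3 : w13 ≠ u2 := fun h => hw13u2 (by rw [h]; exact Or.inl rfl)
        exact tree_c6 hT e12 e13 e23 hwa hwb hwc hx1 hx2 hx3
          ha12a ha12b ha23a ha23b ha13b ha13a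
end Aux

/-- The graph `H`: two adjacent vertices (1 and 4), each with two pendant leaves. -/
def Hgraph : SimpleGraph (Fin 6) :=
  SimpleGraph.fromEdgeSet {s(0, 1), s(1, 2), s(3, 4), s(4, 5), s(1, 4)}

lemma Hadj14 : Hgraph.Adj 1 4 := by
  simp [Hgraph, SimpleGraph.fromEdgeSet_adj, Sym2.eq, Sym2.rel_iff']

lemma Hadj10 : Hgraph.Adj 1 0 := by
  simp [Hgraph, SimpleGraph.fromEdgeSet_adj, Sym2.eq, Sym2.rel_iff']

lemma Hadj12 : Hgraph.Adj 1 2 := by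
  simp [Hgraph, SimpleGraph.fromEdgeSet_adj, Sym2.eq, Sym2.rel_iff']

lemma Hadj43 : Hgraph.Adj 4 3 := by
  simp [Hgraph, SimpleGraph.fromEdgeSet_adj, Sym2.eq, Sym2.rel_iff']

lemma Hadj45 : Hgraph.Adj 4 5 := by
  simp [Hgraph, SimpleGraph.fromEdgeSet_adj, Sym2.eq, Sym2.rel_iff']

lemma Hnb1 : ∀ x : Fin 6, Hgraph.Adj 1 x → x = 0 ∨ x = 2 ∨ x = 4 := by
  intro x
  fin_cases x <;> simp [Hgraph, SimpleGraph.fromEdgeSet_adj, Sym2.eq, Sym2.rel_iff']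

lemma Hnb4 : ∀ x : Fin 6, Hgraph.Adj 4 x → x = 3 ∨ x = 5 ∨ x = 1 := by
  intro x
  fin_cases x <;> simp [Hgraph, SimpleGraph.fromEdgeSet_adj, Sym2.eq, Sym2.rel_iff']

lemma Hnb0 : ∀ x : Fin 6, Hgraph.Adj 0 x → x = 1 := by
  intro x
  fin_cases x <;> simp [Hgraph, SimpleGraph.fromEdgeSet_adj, Sym2.eq, Sym2.rel_iff']

lemma Hnb2 : ∀ x : Fin 6, Hgraph.Adj 2 x → x = 1 := by
  intro x
  fin_cases x <;> simp [Hgraph, SimpleGraph.fromEdgeSet_adj, Sym2.eq, Sym2.rel_iff']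

lemma Hnb3 : ∀ x : Fin 6, Hgraph.Adj 3 x → x = 4 := by
  intro x
  fin_cases x <;> simp [Hgraph, SimpleGraph.fromEdgeSet_adj, Sym2.eq, Sym2.rel_iff']

lemma Hnb5 : ∀ x : Fin 6, Hgraph.Adj 5 x → x = 4 := by
  intro x
  fin_cases x <;> simp [Hgraph, SimpleGraph.fromEdgeSet_adj, Sym2.eq, Sym2.rel_iff']

theorem stmt12 :
    ∀ (V : Type) [Fintype V] [DecidableEq V] (T : SimpleGraph V),
      T.IsTree → IsEmpty ((gammaGraph T) ≃g Hgraph) := by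
  intro V _ _ T hT
  refine ⟨fun φ => ?_⟩
  have hinj : Function.Injective φ.symm := φ.symm.injective
  have hAdj : ∀ i j : Fin 6, Hgraph.Adj i j → (gammaGraph T).Adj (φ.symm i) (φ.symm j) :=
    fun i j h => φ.symm.map_adj_iff.mpr h
  have hnbr : ∀ (i : Fin 6) (F : {X : Finset V // isMinDomSet T X}),
      (gammaGraph T).Adj (φ.symm i) F → Hgraph.Adj i (φ F) := by
    intro i F h
    rw [← φ.symm_apply_apply F] at h
    exact φ.symm.map_adj_iff.mp h
  have hback : ∀ (F : {X : Finset V // isMinDomSet T X}) (j : Fin 6),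
      φ F = j → F = φ.symm j := by
    intro F j h
    rw [← h, φ.symm_apply_apply]
  have hne : ∀ i j : Fin 6, i ≠ j → φ.symm i ≠ φ.symm j :=
    fun i j hij h => hij (hinj h)
  -- neighbourhood structure
  have hnbP : ∀ F, (gammaGraph T).Adj (φ.symm 1) F →
      F = φ.symm 0 ∨ F = φ.symm 2 ∨ F = φ.symm 4 := by
    intro F h
    rcases Hnb1 _ (hnbr 1 F h) with h0 | h0 | h0
    · exact Or.inl (hback F _ h0)
    · exact Or.inr (Or.inl (hback F _ h0))
    · exact Or.inr (Or.inr (hback F _ h0))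
  have hnbQ : ∀ F, (gammaGraph T).Adj (φ.symm 4) F →
      F = φ.symm 3 ∨ F = φ.symm 5 ∨ F = φ.symm 1 := by
    intro F h
    rcases Hnb4 _ (hnbr 4 F h) with h0 | h0 | h0
    · exact Or.inl (hback F _ h0)
    · exact Or.inr (Or.inl (hback F _ h0))
    · exact Or.inr (Or.inr (hback F _ h0))
  have hl0 : ∀ F, (gammaGraph T).Adj (φ.symm 0) F → F = φ.symm 1 :=
    fun F h => hback F _ (Hnb0 _ (hnbr 0 F h))
  have hl2 : ∀ F, (gammaGraph T).Adj (φ.symm 2) F → F = φ.symm 1 :=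
    fun F h => hback F _ (Hnb2 _ (hnbr 2 F h))
  have hl3 : ∀ F, (gammaGraph T).Adj (φ.symm 3) F → F = φ.symm 4 :=
    fun F h => hback F _ (Hnb3 _ (hnbr 3 F h))
  have hl5 : ∀ F, (gammaGraph T).Adj (φ.symm 5) F → F = φ.symm 4 :=
    fun F h => hback F _ (Hnb5 _ (hnbr 5 F h))
  -- the central swap
  obtain ⟨c, c', hadjc, hcP, hc'P, hcQ, hc'Q, hsQ, hsP⟩ := adj_normalize (hAdj 1 4 Hadj14)
  -- side at P
  obtain ⟨hPin, hPsub⟩ := side hT (hne 0 2 (by decide)) (hne 0 4 (by decide))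
    (hne 2 4 (by decide)) (hAdj 1 0 Hadj10) (hAdj 1 2 Hadj12) hnbP hl0 hl2
    hcP hc'P hadjc hsQ
  -- side at Q
  obtain ⟨hQin, hQsub⟩ := side hT (hne 3 5 (by decide)) (hne 3 1 (by decide))
    (hne 5 1 (by decide)) (hAdj 4 3 Hadj43) (hAdj 4 5 Hadj45) hnbQ hl3 hl5
    hc'Q hcQ hadjc.symm hsP
  -- final contradiction
  have hcQpriv : c ∈ privN T (φ.symm 4).1 c' := by
    refine ⟨Or.inr hadjc.symm, ?_⟩
    intro z hz hzc'
    rw [hsQ] at hz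
    rcases Finset.mem_union.mp hz with hz' | hz'
    · obtain ⟨hzP, hzc⟩ := Finset.mem_sdiff.mp hz'
      exact hPin.2 z hzP (by simpa using hzc)
    · exact absurd (Finset.mem_singleton.mp hz') hzc'
  have hcc' : c = c' := hQsub c hcQpriv
  exact hc'P (hcc' ▸ hcP)
end

section
/- Let G be a tree which is the γ-graph of some tree T, let L be a leaf of G with unique neighbour, and suppose x ∈ L is a vertex with at most one L-external private neighbour. Then L is the unique minimum dominating set of T containing x. -/
open SimpleGraph Finset

section Gamma13

variable {V : Type} [Fintype V] [DecidableEq V]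

lemma sym2_ne {p q a b : V} (h1 : p ≠ a) (h2 : p ≠ b) : s(p, q) ≠ s(a, b) := by
  intro h
  have hp : p ∈ s(a, b) := h ▸ Sym2.mem_mk_left p q
  rcases Sym2.mem_iff.mp hp with h' | h'
  · exact h1 h'
  · exact h2 h'

lemma not_reach_del {T : SimpleGraph V} (hT : T.IsAcyclic) {a b : V} (hab : T.Adj a b) :
    ¬ (T.deleteEdges {s(a, b)}).Reachable a b := by
  have h := (isAcyclic_iff_forall_adj_isBridge.mp hT) hab
  exact h

lemma adj_del {T : SimpleGraph V} {a b x y : V} (h : T.Adj x y) (hne : s(x, y) ≠ s(a, b)) :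
    (T.deleteEdges {s(a, b)}).Adj x y := by
  rw [SimpleGraph.deleteEdges_adj]
  exact ⟨h, by simpa using hne⟩

lemma no_c3 {T : SimpleGraph V} (hT : T.IsAcyclic) {a b c : V}
    (hab : T.Adj a b) (hbc : T.Adj b c) (hca : T.Adj c a) : False := by
  apply not_reach_del hT hab
  have r1 : (T.deleteEdges {s(a, b)}).Adj c a := adj_del hca (sym2_ne hca.ne hbc.ne.symm)
  have r2 : (T.deleteEdges {s(a, b)}).Adj c b := adj_del hbc.symm (sym2_ne hca.ne hbc.ne.symm)
  exact r1.reachable.symm.trans r2.reachable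

lemma no_c4 {T : SimpleGraph V} (hT : T.IsAcyclic) {a b c d : V}
    (hab : T.Adj a b) (hbc : T.Adj b c) (hcd : T.Adj c d) (hda : T.Adj d a)
    (hac : a ≠ c) (hbd : b ≠ d) : False := by
  apply not_reach_del hT hab
  have r1 : (T.deleteEdges {s(a, b)}).Adj d a := adj_del hda (sym2_ne hda.ne hbd.symm)
  have r2 : (T.deleteEdges {s(a, b)}).Adj c d := adj_del hcd (sym2_ne hac.symm hbc.ne.symm)
  have r3 : (T.deleteEdges {s(a, b)}).Adj c b := adj_del hbc.symm (sym2_ne hac.symm hbc.ne.symm)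
  exact (r1.reachable.symm.trans r2.reachable.symm).trans r3.reachable

lemma mem_privN {T : SimpleGraph V} {L : Finset V} {u y : V} :
    y ∈ privN T L u ↔ (y = u ∨ T.Adj u y) ∧ ∀ z ∈ L, z ≠ u → ¬(y = z ∨ T.Adj z y) :=
  Iff.rfl

lemma priv_nonempty {T : SimpleGraph V} {L : Finset V} (hL : isMinDomSet T L) {u : V}
    (hu : u ∈ L) : ∃ p, p ∈ privN T L u := by
  by_contra h
  push_neg at h
  have hdom : isDomSet T (L.erase u) := by
    intro v
    obtain ⟨d, hd, hcov⟩ := hL.1 v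
    by_cases hdu : d = u
    · subst hdu
      have hnv := h v
      rw [mem_privN] at hnv
      push_neg at hnv
      obtain ⟨z, hzL, hzu, hcov'⟩ := hnv hcov
      exact ⟨z, Finset.mem_erase.mpr ⟨hzu, hzL⟩, hcov'⟩
    · exact ⟨d, Finset.mem_erase.mpr ⟨hdu, hd⟩, hcov⟩
  have hcard := hL.2 _ hdom
  rw [Finset.card_erase_of_mem hu] at hcard
  have hpos : 0 < L.card := Finset.card_pos.mpr ⟨u, hu⟩
  omega

lemma priv_out {T : SimpleGraph V} {L : Finset V} {u w : V}
    (hw : w ∈ privN T L u) (hne : w ≠ u) : T.Adj u w ∧ w ∉ L := by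
  obtain ⟨h1, h2⟩ := hw
  exact ⟨h1.resolve_left hne, fun hwL => h2 w hwL hne (Or.inl rfl)⟩

lemma dominator {T : SimpleGraph V} {L E : Finset V} (hE : isDomSet T E) {u w : V}
    (hw : w ∈ privN T L u) (huE : u ∉ E) :
    ∃ d, d ∈ E ∧ (w = d ∨ T.Adj d w) ∧ d ∉ L ∧ d ≠ u := by
  obtain ⟨d, hdE, hcov⟩ := hE w
  have hdu : d ≠ u := fun h => huE (h ▸ hdE)
  exact ⟨d, hdE, hcov, fun hdL => hw.2 d hdL hdu hcov, hdu⟩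

/-- Reachability through a finite set of (undirected) edges. -/
def ERel (F : Finset (Sym2 V)) (x y : V) : Prop :=
  Relation.ReflTransGen (fun a b => s(a, b) ∈ F) x y

lemma ERel.mono {F F' : Finset (Sym2 V)} (h : F ⊆ F') {x y : V} (hr : ERel F x y) :
    ERel F' x y :=
  Relation.ReflTransGen.mono (fun a b hab => h hab) x y hr

open Classical in
noncomputable def suppF (F : Finset (Sym2 V)) : Finset V :=
  Finset.univ.filter (fun v => ∃ e ∈ F, v ∈ e)

lemma mem_suppF {F : Finset (Sym2 V)} {v : V} : v ∈ suppF F ↔ ∃ e ∈ F, v ∈ e := by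
  classical
  simp [suppF]

lemma suppF_mono {F G : Finset (Sym2 V)} (h : G ⊆ F) : suppF G ⊆ suppF F := by
  intro v hv
  obtain ⟨f, hf, hvf⟩ := mem_suppF.mp hv
  exact mem_suppF.mpr ⟨f, h hf, hvf⟩

lemma cyc : ∀ F : Finset (Sym2 V), (∀ e ∈ F, ¬ e.IsDiag) → (suppF F).card ≤ F.card →
    F.Nonempty → ∃ a b, s(a, b) ∈ F ∧ ERel (F.erase s(a, b)) a b := by
  classical
  intro F
  induction F using Finset.strongInduction with
  | _ F ih =>
  intro hdiag hcard hne
  obtain ⟨e₀, he₀⟩ := hne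
  obtain ⟨a, b, rfl⟩ : ∃ a b, e₀ = s(a, b) :=
    Sym2.inductionOn e₀ (fun x y => ⟨x, y, rfl⟩)
  have hab : a ≠ b := by
    have := hdiag _ he₀
    rwa [Sym2.mk_isDiag_iff] at this
  by_cases hrel : ERel (F.erase s(a, b)) a b
  · exact ⟨a, b, he₀, hrel⟩
  set F' := F.erase s(a, b) with hF'
  set C : Finset V := Finset.univ.filter (fun v => ERel F' a v) with hC
  have haC : a ∈ C := by
    simp only [hC, Finset.mem_filter, Finset.mem_univ, true_and]
    exact Relation.ReflTransGen.refl
  have hbC : b ∉ C := by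
    simp only [hC, Finset.mem_filter, Finset.mem_univ, true_and]
    exact hrel
  have hclosed : ∀ ⦃x y : V⦄, s(x, y) ∈ F' → x ∈ C → y ∈ C := by
    intro x y hxy hx
    simp only [hC, Finset.mem_filter, Finset.mem_univ, true_and] at hx ⊢
    exact hx.tail hxy
  have hedgeC : ∀ e ∈ F', ∀ x ∈ e, ∀ y ∈ e, x ∈ C → y ∈ C := by
    intro e heF' x hx y hy hxC
    obtain ⟨x', rfl⟩ := Sym2.mem_iff_exists.mp hx
    rcases Sym2.mem_iff.mp hy with rfl | rfl
    · exact hxC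
    · exact hclosed heF' hxC
  set F₁ := F'.filter (fun f => ∀ v ∈ f, v ∈ C) with hF₁
  set F₂ := F'.filter (fun f => ¬ ∀ v ∈ f, v ∈ C) with hF₂
  have hF'F : F' ⊆ F := Finset.erase_subset _ _
  have hF₁F' : F₁ ⊆ F' := Finset.filter_subset _ _
  have hF₂F' : F₂ ⊆ F' := Finset.filter_subset _ _
  have hF₁F : F₁ ⊆ F := hF₁F'.trans hF'F
  have hF₂F : F₂ ⊆ F := hF₂F'.trans hF'F
  have hF₂notC : ∀ f ∈ F₂, ∀ v ∈ f, v ∉ C := by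
    intro f hf v hv hvC
    obtain ⟨hfF', hnall⟩ := Finset.mem_filter.mp hf
    exact hnall (fun w hw => hedgeC f hfF' v hv w hw hvC)
  have hsupp1C : suppF F₁ ⊆ C := by
    intro v hv
    obtain ⟨f, hf, hvf⟩ := mem_suppF.mp hv
    exact (Finset.mem_filter.mp hf).2 v hvf
  have hsupp2C : ∀ v ∈ suppF F₂, v ∉ C := by
    intro v hv
    obtain ⟨f, hf, hvf⟩ := mem_suppF.mp hv
    exact hF₂notC f hf v hvf
  have hdisj : Disjoint (suppF F₁) (suppF F₂) := by
    rw [Finset.disjoint_left]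
    intro v h1 h2
    exact hsupp2C v h2 (hsupp1C h1)
  have haF : a ∈ suppF F := mem_suppF.mpr ⟨s(a, b), he₀, Sym2.mem_mk_left a b⟩
  have hbF : b ∈ suppF F := mem_suppF.mpr ⟨s(a, b), he₀, Sym2.mem_mk_right a b⟩
  have hasupp2 : a ∉ suppF F₂ := fun h => hsupp2C a h haC
  have hbsupp1 : b ∉ suppF F₁ := fun h => hbC (hsupp1C h)
  have hcard' : F'.card + 1 = F.card := Finset.card_erase_add_one he₀
  have hsplit : F₁.card + F₂.card = F'.card :=
    Finset.card_filter_add_card_filter_not _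
  have hs12 : (suppF F₁).card + (suppF F₂).card ≤ (suppF F).card := by
    rw [← Finset.card_union_of_disjoint hdisj]
    exact Finset.card_le_card (Finset.union_subset (suppF_mono hF₁F) (suppF_mono hF₂F))
  have hmain : (F₁.Nonempty ∧ (suppF F₁).card ≤ F₁.card) ∨
      (F₂.Nonempty ∧ (suppF F₂).card ≤ F₂.card) := by
    rcases Finset.eq_empty_or_nonempty F₁ with h1 | h1
    · rcases Finset.eq_empty_or_nonempty F₂ with h2 | h2
      · exfalso
        have hF'e : F'.card = 0 := by
          rw [← hsplit, h1, h2]; simp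
        have h2le : 2 ≤ (suppF F).card := by
          have hsub : ({a, b} : Finset V) ⊆ suppF F := by
            intro v hv
            rcases Finset.mem_insert.mp hv with rfl | hv
            · exact haF
            · rw [Finset.mem_singleton.mp hv]; exact hbF
          have := Finset.card_le_card hsub
          rwa [Finset.card_pair hab] at this
        omega
      · by_cases h2c : (suppF F₂).card ≤ F₂.card
        · exact Or.inr ⟨h2, h2c⟩
        exfalso
        have h1c : F₁.card = 0 := by rw [h1]; simp
        have hains : insert a (suppF F₂) ⊆ suppF F := by
          intro v hv
          rcases Finset.mem_insert.mp hv with rfl | hv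
          · exact haF
          · exact suppF_mono hF₂F hv
        have h3 := Finset.card_le_card hains
        rw [Finset.card_insert_of_notMem hasupp2] at h3
        omega
    · by_cases h1c : (suppF F₁).card ≤ F₁.card
      · exact Or.inl ⟨h1, h1c⟩
      rcases Finset.eq_empty_or_nonempty F₂ with h2 | h2
      · exfalso
        have h2c : F₂.card = 0 := by rw [h2]; simp
        have hbins : insert b (suppF F₁) ⊆ suppF F := by
          intro v hv
          rcases Finset.mem_insert.mp hv with rfl | hv
          · exact hbF
          · exact suppF_mono hF₁F hv
        have h3 := Finset.card_le_card hbins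
        rw [Finset.card_insert_of_notMem hbsupp1] at h3
        omega
      · by_cases h2c : (suppF F₂).card ≤ F₂.card
        · exact Or.inr ⟨h2, h2c⟩
        exfalso
        omega
  have hssub : ∀ {G : Finset (Sym2 V)}, G ⊆ F' → G ⊂ F := by
    intro G hG
    refine ⟨hG.trans hF'F, fun hFG => ?_⟩
    have : s(a, b) ∈ F' := hG (hFG he₀)
    exact (Finset.mem_erase.mp this).1 rfl
  rcases hmain with ⟨hne1, hc1⟩ | ⟨hne2, hc2⟩
  · obtain ⟨a', b', hin, hr⟩ := ih F₁ (hssub hF₁F') (fun e he => hdiag e (hF₁F he)) hc1 hne1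
    exact ⟨a', b', hF₁F hin, hr.mono (Finset.erase_subset_erase _ hF₁F)⟩
  · obtain ⟨a', b', hin, hr⟩ := ih F₂ (hssub hF₂F') (fun e he => hdiag e (hF₂F he)) hc2 hne2
    exact ⟨a', b', hF₂F hin, hr.mono (Finset.erase_subset_erase _ hF₂F)⟩

lemma no_second {T : SimpleGraph V} (hT : T.IsTree) {L E : Finset V}
    (hE : isDomSet T E) (hBA : (E \ L).card ≤ (L \ E).card)
    (hAne : (L \ E).Nonempty)
    (hbad : ∀ u ∈ L \ E, ∃ w₁ w₂ : V, w₁ ≠ w₂ ∧ w₁ ∈ privN T L u ∧ w₁ ≠ u ∧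
      w₂ ∈ privN T L u ∧ w₂ ≠ u) : False := by
  classical
  set A := L \ E with hA
  have hmem : ∀ u : {u : V // u ∈ A}, u.1 ∈ L ∧ u.1 ∉ E :=
    fun u => Finset.mem_sdiff.mp u.2
  choose w1 w2 hw12 hw1p hw1u hw2p hw2u using fun u : {u : V // u ∈ A} => hbad u.1 u.2
  have hw1adj : ∀ u, T.Adj u.1 (w1 u) := fun u => (priv_out (hw1p u) (hw1u u)).1
  have hw1L : ∀ u, w1 u ∉ L := fun u => (priv_out (hw1p u) (hw1u u)).2
  have hw2adj : ∀ u, T.Adj u.1 (w2 u) := fun u => (priv_out (hw2p u) (hw2u u)).1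
  have hw2L : ∀ u, w2 u ∉ L := fun u => (priv_out (hw2p u) (hw2u u)).2
  choose d1 hd1E hd1c hd1L hd1u using
    fun u : {u : V // u ∈ A} => dominator hE (hw1p u) (hmem u).2
  choose d2 hd2E hd2c hd2L hd2u using
    fun u : {u : V // u ∈ A} => dominator hE (hw2p u) (hmem u).2
  have hd12 : ∀ u, d1 u ≠ d2 u := by
    intro u heq
    rcases hd1c u with h1 | h1 <;> rcases hd2c u with h2 | h2
    · exact hw12 u ((h1.trans heq).trans h2.symm)
    · have hadj : T.Adj (w1 u) (w2 u) := by rw [h1, heq]; exact h2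
      exact no_c3 hT.2 (hw1adj u) hadj (hw2adj u).symm
    · have hadj : T.Adj (w2 u) (w1 u) := by rw [h2, ← heq]; exact h1
      exact no_c3 hT.2 (hw2adj u) hadj (hw1adj u).symm
    · have h2' : T.Adj (d1 u) (w2 u) := heq ▸ h2
      exact no_c4 hT.2 (hw1adj u) h1.symm h2' (hw2adj u).symm (hd1u u).symm (hw12 u)
  -- transporting reachability around a non-distinguished element of A
  have reach_core : ∀ (u u₀ : {u : V // u ∈ A}) (w₀ : V), w₀ ∉ L → u ≠ u₀ →
      (T.deleteEdges {s(u₀.1, w₀)}).Reachable (d1 u) (d2 u) := by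
    intro u u₀ w₀ hw₀L hne
    have hvne : u.1 ≠ u₀.1 := fun h => hne (Subtype.ext h)
    have key : ∀ (w d : V), w ∈ privN T L u.1 → w ≠ u.1 → (w = d ∨ T.Adj d w) → d ∉ L →
        (T.deleteEdges {s(u₀.1, w₀)}).Reachable u.1 d := by
      intro w d hwp hwu hc hdL
      have hadj := (priv_out hwp hwu).1
      have hwL := (priv_out hwp hwu).2
      have hne1 : s(u.1, w) ≠ s(u₀.1, w₀) :=
        (sym2_ne hvne.symm (fun h => hwL (by rw [← h]; exact (hmem u₀).1))).symm
      have r1 : (T.deleteEdges {s(u₀.1, w₀)}).Reachable u.1 w :=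
        (adj_del hadj hne1).reachable
      rcases hc with rfl | hc
      · exact r1
      · have hne2 : s(d, w) ≠ s(u₀.1, w₀) :=
          (sym2_ne (fun h => hdL (by rw [← h]; exact (hmem u₀).1)) (fun h => hwL (by rw [← h]; exact (hmem u₀).1))).symm
        exact r1.trans (adj_del hc hne2).reachable.symm
    exact ((key (w1 u) (d1 u) (hw1p u) (hw1u u) (hd1c u) (hd1L u)).symm).trans
      (key (w2 u) (d2 u) (hw2p u) (hw2u u) (hd2c u) (hd2L u))
  -- the two "own" side paths, avoiding the bridge s(u.1, w1 u)
  have side1 : ∀ u : {u : V // u ∈ A},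
      (T.deleteEdges {s(u.1, w1 u)}).Reachable u.1 (d2 u) := by
    intro u
    have hu1w2 : u.1 ≠ w2 u := fun h => hw2L u (by rw [← h]; exact (hmem u).1)
    have hne1 : s(w2 u, u.1) ≠ s(u.1, w1 u) :=
      sym2_ne (fun h => hu1w2 h.symm) (fun h => hw12 u h.symm)
    have r1 : (T.deleteEdges {s(u.1, w1 u)}).Reachable u.1 (w2 u) :=
      (adj_del (hw2adj u).symm hne1).reachable.symm
    rcases hd2c u with h | h
    · rw [← h]; exact r1
    · have hne2 : s(d2 u, w2 u) ≠ s(u.1, w1 u) :=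
        (sym2_ne (q := w1 u) (hd2u u).symm hu1w2).symm
      exact r1.trans (adj_del h hne2).reachable.symm
  have side2 : ∀ u : {u : V // u ∈ A},
      (T.deleteEdges {s(u.1, w1 u)}).Reachable (d1 u) (w1 u) := by
    intro u
    have hu1w1 : u.1 ≠ w1 u := fun h => hw1L u (by rw [← h]; exact (hmem u).1)
    rcases hd1c u with h | h
    · rw [← h]
    · have hne2 : s(d1 u, w1 u) ≠ s(u.1, w1 u) :=
        (sym2_ne (q := w1 u) (hd1u u).symm hu1w1).symm
      exact (adj_del h hne2).reachable
  by_cases hinj : ∀ u u' : {u : V // u ∈ A}, s(d1 u, d2 u) = s(d1 u', d2 u') → u = u'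
  · -- injective "pair" map; build the edge finset and find a cycle
    set pair : {u : V // u ∈ A} → Sym2 V := fun u => s(d1 u, d2 u) with hpair
    set F : Finset (Sym2 V) := A.attach.image pair with hF
    have hFdiag : ∀ e ∈ F, ¬ e.IsDiag := by
      intro e heF
      obtain ⟨u, _, rfl⟩ := Finset.mem_image.mp heF
      rw [hpair, Sym2.mk_isDiag_iff]
      exact hd12 u
    have hsupp : suppF F ⊆ E \ L := by
      intro v hv
      obtain ⟨e, heF, hve⟩ := mem_suppF.mp hv
      obtain ⟨u, _, rfl⟩ := Finset.mem_image.mp heF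
      rcases Sym2.mem_iff.mp hve with rfl | rfl
      · exact Finset.mem_sdiff.mpr ⟨hd1E u, hd1L u⟩
      · exact Finset.mem_sdiff.mpr ⟨hd2E u, hd2L u⟩
    have hFcard : F.card = A.card := by
      rw [hF, Finset.card_image_of_injective _ (fun u u' h => hinj u u' h),
        Finset.card_attach]
    have hFc : (suppF F).card ≤ F.card := by
      calc (suppF F).card ≤ (E \ L).card := Finset.card_le_card hsupp
        _ ≤ A.card := hBA
        _ = F.card := hFcard.symm
    have hFne : F.Nonempty := by
      rw [hF]
      exact (Finset.attach_nonempty_iff.mpr hAne).image pair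
    obtain ⟨a, b, habF, hrel⟩ := cyc F hFdiag hFc hFne
    obtain ⟨u₀, _, hpair₀⟩ := Finset.mem_image.mp habF
    have transfer : ∀ {x y : V}, ERel (F.erase s(a, b)) x y →
        (T.deleteEdges {s(u₀.1, w1 u₀)}).Reachable x y := by
      intro x y h
      induction h with
      | refl => exact Reachable.refl _
      | tail h₁ h₂ ih =>
        refine ih.trans ?_
        have hmemF := Finset.mem_of_mem_erase h₂
        have hne_ab := Finset.ne_of_mem_erase h₂
        obtain ⟨u', _, hpu'⟩ := Finset.mem_image.mp hmemF
        have hu'ne : u' ≠ u₀ := by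
          intro heq
          exact hne_ab (by rw [← hpu', heq, hpair₀])
        have hr := reach_core u' u₀ (w1 u₀) (hw1L u₀) hu'ne
        rcases Sym2.eq_iff.mp hpu' with ⟨h1, h2⟩ | ⟨h1, h2⟩
        · rw [← h1, ← h2]; exact hr
        · rw [← h1, ← h2]; exact hr.symm
    apply not_reach_del hT.2 (hw1adj u₀)
    have rab : (T.deleteEdges {s(u₀.1, w1 u₀)}).Reachable a b := transfer hrel
    have r3 : (T.deleteEdges {s(u₀.1, w1 u₀)}).Reachable (d2 u₀) (d1 u₀) := by
      rcases Sym2.eq_iff.mp hpair₀ with ⟨h1, h2⟩ | ⟨h1, h2⟩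
      · rw [h1, h2]; exact rab.symm
      · rw [h1, h2]; exact rab
    exact ((side1 u₀).trans r3).trans (side2 u₀)
  · -- two distinct elements of A with the same pair
    push_neg at hinj
    obtain ⟨u, u', hpaireq, hne⟩ := hinj
    apply not_reach_del hT.2 (hw1adj u)
    have r2 : (T.deleteEdges {s(u.1, w1 u)}).Reachable (d1 u') (d2 u') :=
      reach_core u' u (w1 u) (hw1L u) hne.symm
    have r3 : (T.deleteEdges {s(u.1, w1 u)}).Reachable (d2 u) (d1 u) := by
      rcases Sym2.eq_iff.mp hpaireq with ⟨h1, h2⟩ | ⟨h1, h2⟩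
      · rw [h1, h2]; exact r2.symm
      · rw [h1, h2]; exact r2
    exact ((side1 u).trans r3).trans (side2 u)

lemma exists_nbr {T : SimpleGraph V} (hT : T.IsTree) {L : Finset V} (hL : isMinDomSet T L)
    {u z : V} (hu : u ∈ L) (hz : z ≠ u)
    (hgood : ∀ w ∈ privN T L u, ∀ w' ∈ privN T L u, w ≠ u → w' ≠ u → w = w') :
    ∃ (M : Finset V) (hM : isMinDomSet T M),
      (gammaGraph T).Adj ⟨L, hL⟩ ⟨M, hM⟩ ∧ u ∉ M ∧ L.erase u ⊆ M := by
  classical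
  have hv : ∃ v, T.Adj u v ∧ v ∉ L ∧ ∀ w ∈ privN T L u, w = u ∨ w = v := by
    by_cases hext : ∃ w ∈ privN T L u, w ≠ u
    · obtain ⟨w, hwp, hwu⟩ := hext
      obtain ⟨hadj, hwL⟩ := priv_out hwp hwu
      refine ⟨w, hadj, hwL, fun w' hw' => ?_⟩
      by_cases h : w' = u
      · exact Or.inl h
      · exact Or.inr (hgood w' hw' w hwp h hwu)
    · push_neg at hext
      obtain ⟨p, hp⟩ := priv_nonempty hL hu
      have hpu : p = u := hext p hp
      subst hpu
      obtain ⟨pwalk⟩ := hT.isConnected.preconnected p z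
      cases pwalk with
      | nil => exact absurd rfl hz.symm
      | @cons _ v _ h q =>
        have hvL : v ∉ L := by
          intro hvL
          exact hp.2 v hvL h.ne' (Or.inr h.symm)
        exact ⟨v, h, hvL, fun w hw => Or.inl (hext w hw)⟩
  obtain ⟨v, huv, hvL, hpn⟩ := hv
  set M := (L \ {u}) ∪ {v} with hM
  have huM : u ∉ M := by
    intro h
    rcases Finset.mem_union.mp h with h | h
    · exact (Finset.mem_sdiff.mp h).2 (Finset.mem_singleton_self u)
    · exact huv.ne (Finset.mem_singleton.mp h)
  have hdomM : isDomSet T M := by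
    intro t
    obtain ⟨d, hd, hcov⟩ := hL.1 t
    by_cases hdu : d = u
    · subst hdu
      by_cases ht : t ∈ privN T L d
      · refine ⟨v, Finset.mem_union_right _ (Finset.mem_singleton_self v), ?_⟩
        rcases hpn t ht with rfl | rfl
        · exact Or.inr huv.symm
        · exact Or.inl rfl
      · rw [mem_privN] at ht
        push_neg at ht
        obtain ⟨z', hz'L, hz'u, hcov'⟩ := ht hcov
        refine ⟨z', Finset.mem_union_left _ (Finset.mem_sdiff.mpr ⟨hz'L, ?_⟩), hcov'⟩
        simpa using hz'u
    · refine ⟨d, Finset.mem_union_left _ (Finset.mem_sdiff.mpr ⟨hd, ?_⟩), hcov⟩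
      simpa using hdu
  have hcardM : M.card ≤ L.card := by
    have h1 : M = insert v (L \ {u}) := by rw [hM, Finset.union_comm, ← Finset.insert_eq]
    have h2 : (L \ {u}).card = L.card - 1 := by
      rw [← Finset.erase_eq]
      exact Finset.card_erase_of_mem hu
    have h3 : 0 < L.card := Finset.card_pos.mpr ⟨u, hu⟩
    have h4 := Finset.card_insert_le v (L \ {u})
    rw [← h1] at h4
    omega
  have hminM : isMinDomSet T M := ⟨hdomM, fun D' hD' => hcardM.trans (hL.2 D' hD')⟩
  have hLM : L ≠ M := fun h => huM (h ▸ hu)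
  refine ⟨M, hminM, ⟨fun h => hLM (Subtype.ext_iff.mp h), u, v, huv, Or.inl hM⟩, huM, ?_⟩
  intro w hw
  exact Finset.mem_union_left _ (by rwa [Finset.erase_eq] at hw)

end Gamma13

theorem stmt13 {V : Type} [Fintype V] [DecidableEq V] (T : SimpleGraph V) (hT : T.IsTree)
    (hGtree : (gammaGraph T).IsTree)
    (L : Finset V) (hL : isMinDomSet T L)
    (hleaf : ((gammaGraph T).neighborSet ⟨L, hL⟩).ncard = 1)
    (x : V) (hx : x ∈ L) (hpn : (privN T L x \ {x}).ncard ≤ 1) :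
    ∀ E : Finset V, isMinDomSet T E → x ∈ E → E = L := by
  classical
  intro E hE hxE
  by_contra hEL
  have hcardLE : L.card = E.card := le_antisymm (hL.2 E hE.1) (hE.2 L hL.1)
  have hAne : (L \ E).Nonempty := by
    rw [Finset.sdiff_nonempty]
    intro hsub
    exact hEL (Finset.eq_of_subset_of_card_le hsub (le_of_eq hcardLE.symm)).symm
  obtain ⟨u₀, hu₀⟩ := hAne
  have hu₀E := (Finset.mem_sdiff.mp hu₀).2
  have hxgood : ∀ w ∈ privN T L x, ∀ w' ∈ privN T L x, w ≠ x → w' ≠ x → w = w' := by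
    have h := (Set.ncard_le_one (Set.toFinite _)).mp hpn
    intro w hw w' hw' hwx hw'x
    exact h w ⟨hw, hwx⟩ w' ⟨hw', hw'x⟩
  obtain ⟨N, hN, hadjN, hxN, -⟩ :=
    exists_nbr hT hL hx (show u₀ ≠ x from fun h => hu₀E (h ▸ hxE)) hxgood
  by_cases hgood : ∃ u ∈ L \ E,
      ∀ w ∈ privN T L u, ∀ w' ∈ privN T L u, w ≠ u → w' ≠ u → w = w'
  · obtain ⟨u, hu, hug⟩ := hgood
    have huE := (Finset.mem_sdiff.mp hu).2
    have hxu : x ≠ u := fun h => huE (h ▸ hxE)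
    obtain ⟨M, hM, hadjM, huM, hsubM⟩ :=
      exists_nbr hT hL (Finset.mem_sdiff.mp hu).1 hxu hug
    have hxM : x ∈ M := hsubM (Finset.mem_erase.mpr ⟨hxu, hx⟩)
    obtain ⟨P, hP⟩ := Set.ncard_eq_one.mp hleaf
    have h1 : (⟨N, hN⟩ : {D : Finset V // isMinDomSet T D}) = P := by
      have hmem : (⟨N, hN⟩ : {D : Finset V // isMinDomSet T D}) ∈
          (gammaGraph T).neighborSet ⟨L, hL⟩ := hadjN
      rw [hP] at hmem
      exact hmem
    have h2 : (⟨M, hM⟩ : {D : Finset V // isMinDomSet T D}) = P := by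
      have hmem : (⟨M, hM⟩ : {D : Finset V // isMinDomSet T D}) ∈
          (gammaGraph T).neighborSet ⟨L, hL⟩ := hadjM
      rw [hP] at hmem
      exact hmem
    have hNM : N = M := Subtype.ext_iff.mp (h1.trans h2.symm)
    exact hxN (hNM ▸ hxM)
  · push_neg at hgood
    refine no_second hT hE.1 (le_of_eq (Finset.card_sdiff_comm hcardLE.symm)) ?_ ?_
    · exact ⟨u₀, hu₀⟩
    · intro u hu
      obtain ⟨w, hwp, w', hw'p, hwu, hw'u, hww'⟩ := hgood u hu
      exact ⟨w, w', hww', hwp, hwu, hw'p, hw'u⟩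
end

section
/- For each n ≥ 1, let Y_n be the tree obtained from n disjoint copies of the star K_{1,3} by joining one leaf of each copy to a single new common vertex. Then the γ-graph of Y_n is isomorphic to the star K_{1,n}. Moreover, in each γ-set of Y_n corresponding to a leaf of K_{1,n}, every vertex of the γ-set has an external private neighbour. -/
open SimpleGraph Finset

/-- The star `K_{1,n}`, centre `none`. -/
def starGraph (n : ℕ) : SimpleGraph (Option (Fin n)) :=
  SimpleGraph.fromRel (fun u _ => u = none)

/-- `Y n`: `n` copies of `K_{1,3}` (centre `(i,0)`, leaves `(i,1), (i,2), (i,3)`),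
with the leaf `(i,3)` of each copy joined to a common vertex `none`. -/
def Ygraph (n : ℕ) : SimpleGraph (Option (Fin n × Fin 4)) :=
  SimpleGraph.fromRel (fun u v =>
    match u, v with
    | some (i, a), some (j, b) => i = j ∧ a = 0 ∧ b ≠ 0
    | some (_, a), none => a = 3
    | _, _ => False)

section Aux
variable {n : ℕ}

lemma Yadj_ss {i j : Fin n} {a b : Fin 4} :
    (Ygraph n).Adj (some (i,a)) (some (j,b)) ↔
      (i,a) ≠ (j,b) ∧ ((i = j ∧ a = 0 ∧ b ≠ 0) ∨ (j = i ∧ b = 0 ∧ a ≠ 0)) := by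
  simp [Ygraph, SimpleGraph.fromRel_adj]

lemma Yadj_sn {i : Fin n} {a : Fin 4} :
    (Ygraph n).Adj (some (i,a)) none ↔ a = 3 := by
  rw [Ygraph, SimpleGraph.fromRel_adj]
  exact ⟨fun h => h.2.elim id False.elim, fun h => ⟨by simp, Or.inl h⟩⟩

lemma Yadj_ns {i : Fin n} {a : Fin 4} :
    (Ygraph n).Adj none (some (i,a)) ↔ a = 3 := by
  rw [Ygraph, SimpleGraph.fromRel_adj]
  exact ⟨fun h => h.2.elim False.elim id, fun h => ⟨by simp, Or.inr h⟩⟩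

lemma Yadj_nn : ¬ (Ygraph n).Adj none none := (Ygraph n).irrefl

lemma mem_cn {x y : Option (Fin n × Fin 4)} :
    y ∈ closedNbhd (Ygraph n) x ↔ y = x ∨ (Ygraph n).Adj x y :=
  Iff.rfl

end Aux
section Aux2
variable {n : ℕ}

/-- set of all centres -/
def centres (n : ℕ) : Finset (Option (Fin n × Fin 4)) :=
  Finset.univ.image (fun i => some (i, (0 : Fin 4)))

lemma mem_centres {x : Option (Fin n × Fin 4)} :
    x ∈ centres n ↔ ∃ i, x = some (i, 0) := by
  simp [centres, eq_comm]

def Dset0 (n : ℕ) : Finset (Option (Fin n × Fin 4)) := insert none (centres n)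

def DsetI (n : ℕ) (i : Fin n) : Finset (Option (Fin n × Fin 4)) :=
  insert (some (i, 3)) (centres n)

lemma none_not_centres : (none : Option (Fin n × Fin 4)) ∉ centres n := by
  simp [mem_centres]

lemma three_not_centres {i : Fin n} : (some (i,(3:Fin 4))) ∉ centres n := by
  simp [mem_centres]

lemma card_centres : (centres n).card = n := by
  rw [centres, Finset.card_image_of_injective _ (fun a b h => by
    simpa using (Option.some_injective _ h))]
  simp

lemma card_Dset0 : (Dset0 n).card = n + 1 := by
  rw [Dset0, Finset.card_insert_of_notMem none_not_centres, card_centres]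

lemma card_DsetI {i : Fin n} : (DsetI n i).card = n + 1 := by
  rw [DsetI, Finset.card_insert_of_notMem three_not_centres, card_centres]

lemma centre_dominates {i : Fin n} {a : Fin 4} :
    some (i, a) ∈ closedNbhd (Ygraph n) (some (i, 0)) := by
  rw [mem_cn]
  by_cases h : a = 0
  · exact Or.inl (by simp [h])
  · exact Or.inr (Yadj_ss.mpr ⟨by simp [Ne.symm h], Or.inl ⟨rfl, rfl, h⟩⟩)

lemma dom_Dset0 : isDomSet (Ygraph n) (Dset0 n) := by
  intro v
  match v with
  | none => exact ⟨none, by simp [Dset0], Or.inl rfl⟩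
  | some (i, a) =>
      exact ⟨some (i,0), by simp [Dset0, mem_centres], centre_dominates⟩

lemma dom_DsetI {i : Fin n} : isDomSet (Ygraph n) (DsetI n i) := by
  intro v
  match v with
  | none =>
      exact ⟨some (i,3), by simp [DsetI], Or.inr (Yadj_sn.mpr rfl)⟩
  | some (j, a) =>
      exact ⟨some (j,0), by simp [DsetI, mem_centres], centre_dominates⟩

/-- who can dominate (i,1) or (i,2) -/
lemma dominator_of_leaf {i : Fin n} {a : Fin 4} (ha0 : a ≠ 0) (ha3 : a ≠ 3)
    {x : Option (Fin n × Fin 4)} (h : some (i, a) ∈ closedNbhd (Ygraph n) x) :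
    x = some (i, 0) ∨ x = some (i, a) := by
  rw [mem_cn] at h
  rcases h with h | h
  · exact Or.inr h.symm
  · match x with
    | none => exact absurd (Yadj_ns.mp h) ha3
    | some (j, b) =>
        rcases (Yadj_ss.mp h).2 with ⟨hij, hb, -⟩ | ⟨hij, hb, hb'⟩
        · exact Or.inl (by rw [hij, hb])
        · exact absurd hb ha0

/-- who can dominate none -/
lemma dominator_of_none {x : Option (Fin n × Fin 4)}
    (h : (none : Option (Fin n × Fin 4)) ∈ closedNbhd (Ygraph n) x) :
    x = none ∨ ∃ j, x = some (j, 3) := by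
  rw [mem_cn] at h
  rcases h with h | h
  · exact Or.inl h.symm
  · match x with
    | none => exact Or.inl rfl
    | some (j, b) => exact Or.inr ⟨j, by rw [Yadj_sn.mp h]⟩

end Aux2
section Aux3
variable {n : ℕ}

lemma lower_bound {D : Finset (Option (Fin n × Fin 4))} (hD : isDomSet (Ygraph n) D) :
    n + 1 ≤ D.card := by
  classical
  -- choose dominators
  choose d hd hcn using hD
  set f : Option (Fin n) → Option (Fin n × Fin 4) :=
    fun o => match o with
      | none => d none
      | some i => d (some (i, 1)) with hf
  have hmem : ∀ o : Option (Fin n), f o ∈ D := by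
    intro o; match o with
    | none => exact hd none
    | some i => exact hd (some (i,1))
  have hchar : ∀ i : Fin n, f (some i) = some (i,0) ∨ f (some i) = some (i,1) :=
    fun i => dominator_of_leaf (by decide) (by decide) (hcn (some (i,1)))
  have hchar0 : f none = none ∨ ∃ j, f none = some (j, 3) :=
    dominator_of_none (hcn none)
  have hinj : Set.InjOn f (Finset.univ : Finset (Option (Fin n))) := by
    intro o1 _ o2 _ heq
    match o1, o2 with
    | none, none => rfl
    | some i, some j =>
        rcases hchar i with h1 | h1 <;> rcases hchar j with h2 | h2 <;>
          rw [h1, h2] at heq <;> simp_all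
    | none, some j =>
        exfalso
        rcases hchar0 with h1 | ⟨k, h1⟩ <;> rcases hchar j with h2 | h2 <;>
          rw [h1, h2] at heq <;> simp_all
    | some i, none =>
        exfalso
        rcases hchar0 with h1 | ⟨k, h1⟩ <;> rcases hchar i with h2 | h2 <;>
          rw [h1, h2] at heq <;> simp_all
  calc n + 1 = (Finset.univ : Finset (Option (Fin n))).card := by simp
    _ ≤ D.card := Finset.card_le_card_of_injOn f (fun a _ => hmem a) hinj

lemma min_Dset0 : isMinDomSet (Ygraph n) (Dset0 n) :=
  ⟨dom_Dset0, fun D' hD' => card_Dset0 ▸ lower_bound hD'⟩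

lemma min_DsetI {i : Fin n} : isMinDomSet (Ygraph n) (DsetI n i) :=
  ⟨dom_DsetI, fun D' hD' => card_DsetI ▸ lower_bound hD'⟩

end Aux3
section Aux4
variable {n : ℕ}

lemma centres_subset {D : Finset (Option (Fin n × Fin 4))}
    (hD : isMinDomSet (Ygraph n) D) : centres n ⊆ D := by
  classical
  intro x hx
  rcases mem_centres.mp hx with ⟨i, rfl⟩
  by_contra h0
  -- then (i,1) and (i,2) are in D
  obtain ⟨d1, hd1, hc1⟩ := hD.1 (some (i,1))
  obtain ⟨d2, hd2, hc2⟩ := hD.1 (some (i,2))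
  have h1 : d1 = some (i,1) := by
    rcases dominator_of_leaf (by decide) (by decide) hc1 with h | h
    · exact absurd (h ▸ hd1) h0
    · exact h
  have h2 : d2 = some (i,2) := by
    rcases dominator_of_leaf (by decide) (by decide) hc2 with h | h
    · exact absurd (h ▸ hd2) h0
    · exact h
  subst h1; subst h2
  -- build a smaller dominating set
  set D' := insert (some (i,(0:Fin 4))) (D \ {some (i,1), some (i,2)}) with hD'
  have hdom' : isDomSet (Ygraph n) D' := by
    intro v
    obtain ⟨d, hd, hc⟩ := hD.1 v
    by_cases hde : d = some (i,1) ∨ d = some (i,2)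
    · refine ⟨some (i,0), by simp [hD'], ?_⟩
      -- v ∈ closedNbhd of (i,1) or (i,2) means v ∈ {(i,1),(i,2),(i,0)}
      have hv : v = some (i,0) ∨ v = some (i,1) ∨ v = some (i,2) := by
        rcases hde with rfl | rfl
        · rw [mem_cn] at hc
          rcases hc with h | h
          · exact Or.inr (Or.inl h)
          · match v, h with
            | none, h => exact absurd (Yadj_sn.mp h) (by decide)
            | some (j,b), h =>
                rcases (Yadj_ss.mp h).2 with ⟨hij, hb, -⟩ | ⟨hij, hb, hb'⟩
                · exact absurd hb (by decide)
                · exact Or.inl (by rw [hij, hb])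
        · rw [mem_cn] at hc
          rcases hc with h | h
          · exact Or.inr (Or.inr h)
          · match v, h with
            | none, h => exact absurd (Yadj_sn.mp h) (by decide)
            | some (j,b), h =>
                rcases (Yadj_ss.mp h).2 with ⟨hij, hb, -⟩ | ⟨hij, hb, hb'⟩
                · exact absurd hb (by decide)
                · exact Or.inl (by rw [hij, hb])
      rcases hv with rfl | rfl | rfl
      · exact Or.inl rfl
      · exact centre_dominates
      · exact centre_dominates
    · push_neg at hde
      exact ⟨d, by simp [hD', Finset.mem_sdiff, hd, hde.1, hde.2], hc⟩
  have hcard : D'.card < D.card := by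
    have h12 : (some (i,(1:Fin 4))) ≠ some (i,(2:Fin 4)) := by simp
    have hsub : ({some (i,(1:Fin 4)), some (i,(2:Fin 4))} : Finset _) ⊆ D := by
      intro x hx; simp at hx; rcases hx with rfl | rfl <;> assumption
    have : (D \ {some (i,(1:Fin 4)), some (i,(2:Fin 4))}).card = D.card - 2 := by
      rw [Finset.card_sdiff_of_subset hsub, Finset.card_insert_of_notMem (by simp),
        Finset.card_singleton]
    calc D'.card ≤ (D \ {some (i,(1:Fin 4)), some (i,(2:Fin 4))}).card + 1 :=
          Finset.card_insert_le _ _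
      _ = D.card - 2 + 1 := by rw [this]
      _ < D.card := by
          have : 2 ≤ D.card := by
            have := Finset.card_le_card hsub
            simpa using this
          omega
  exact absurd (hD.2 D' hdom') (by omega)

lemma classify {D : Finset (Option (Fin n × Fin 4))}
    (hD : isMinDomSet (Ygraph n) D) : D = Dset0 n ∨ ∃ i, D = DsetI n i := by
  classical
  obtain ⟨d, hd, hc⟩ := hD.1 none
  have hcards : D.card ≤ n + 1 := card_Dset0 ▸ hD.2 (Dset0 n) dom_Dset0
  rcases dominator_of_none hc with rfl | ⟨j, rfl⟩
  · left
    refine (Finset.eq_of_subset_of_card_le ?_ (by rw [card_Dset0]; exact hcards)).symm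
    intro x hx
    rcases Finset.mem_insert.mp hx with rfl | hx
    · exact hd
    · exact centres_subset hD hx
  · right; refine ⟨j, ?_⟩
    refine (Finset.eq_of_subset_of_card_le ?_ (by rw [card_DsetI]; exact hcards)).symm
    intro x hx
    rcases Finset.mem_insert.mp hx with rfl | hx
    · exact hd
    · exact centres_subset hD hx

end Aux4
section Aux5
variable {n : ℕ}

lemma star_adj {a b : Option (Fin n)} :
    (_root_.starGraph n).Adj a b ↔ a ≠ b ∧ (a = none ∨ b = none) := by
  simp [_root_.starGraph, SimpleGraph.fromRel_adj]

def gmap (n : ℕ) :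
    Option (Fin n) → {D : Finset (Option (Fin n × Fin 4)) // isMinDomSet (Ygraph n) D}
  | none => ⟨Dset0 n, min_Dset0⟩
  | some i => ⟨DsetI n i, min_DsetI⟩

lemma none_mem_Dset0 : (none : Option (Fin n × Fin 4)) ∈ Dset0 n := by simp [Dset0]

lemma none_not_mem_DsetI {i : Fin n} : (none : Option (Fin n × Fin 4)) ∉ DsetI n i := by
  simp [DsetI, mem_centres]

lemma three_mem_DsetI_iff {i j : Fin n} :
    some (i, (3:Fin 4)) ∈ DsetI n j ↔ i = j := by
  simp [DsetI, mem_centres]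

lemma Dset0_ne_DsetI {i : Fin n} : Dset0 n ≠ DsetI n i := fun h =>
  none_not_mem_DsetI (h ▸ none_mem_Dset0)

lemma gmap_inj : Function.Injective (gmap n) := by
  intro a b hab
  have h := Subtype.ext_iff.mp hab
  match a, b with
  | none, none => rfl
  | none, some j => exact absurd h Dset0_ne_DsetI
  | some i, none => exact absurd h.symm Dset0_ne_DsetI
  | some i, some j =>
      have h' : DsetI n i = DsetI n j := h
      have : some (i,(3:Fin 4)) ∈ DsetI n j := h' ▸ (by simp [DsetI])
      rw [three_mem_DsetI_iff.mp this]

lemma gmap_surj : Function.Surjective (gmap n) := by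
  intro D
  rcases classify D.2 with h | ⟨i, h⟩
  · exact ⟨none, Subtype.ext h.symm⟩
  · exact ⟨some i, Subtype.ext h.symm⟩

lemma swap_identity {i : Fin n} :
    DsetI n i = (Dset0 n \ {none}) ∪ {some (i,(3:Fin 4))} := by
  ext x
  simp only [DsetI, Dset0, Finset.mem_insert, Finset.mem_union, Finset.mem_sdiff,
    Finset.mem_singleton, mem_centres]
  constructor
  · rintro (rfl | ⟨k, rfl⟩)
    · exact Or.inr rfl
    · exact Or.inl ⟨Or.inr ⟨k, rfl⟩, by simp⟩
  · rintro (⟨(rfl | ⟨k, rfl⟩), hne⟩ | rfl)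
    · exact absurd rfl hne
    · exact Or.inr ⟨k, rfl⟩
    · exact Or.inl rfl

lemma gamma_adj_none_some {i : Fin n} :
    (gammaGraph (Ygraph n)).Adj (gmap n none) (gmap n (some i)) := by
  refine ⟨fun h => Dset0_ne_DsetI (Subtype.ext_iff.mp h), none, some (i,3),
    Yadj_ns.mpr rfl, Or.inl ?_⟩
  exact swap_identity

lemma gamma_not_adj_some_some {i j : Fin n} (hij : i ≠ j) :
    ¬ (gammaGraph (Ygraph n)).Adj (gmap n (some i)) (gmap n (some j)) := by
  rintro ⟨hne, u, v, huv, horig | horig⟩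
  · have h : DsetI n j = (DsetI n i \ {u}) ∪ {v} := horig
    have hu : u = some (i,(3:Fin 4)) := by
      by_contra hu
      have : some (i,(3:Fin 4)) ∈ DsetI n j := by
        rw [h]
        exact Finset.mem_union_left _ (Finset.mem_sdiff.mpr
          ⟨by simp [DsetI], by simpa using fun he => hu he.symm⟩)
      exact hij (three_mem_DsetI_iff.mp this)
    have hv : v = some (j,(3:Fin 4)) := by
      have : some (j,(3:Fin 4)) ∈ (DsetI n i \ {u}) ∪ {v} := by
        rw [← h]; simp [DsetI]
      rcases Finset.mem_union.mp this with hmem | hmem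
      · exact absurd (three_mem_DsetI_iff.mp (Finset.mem_sdiff.mp hmem).1) (Ne.symm hij)
      · exact (Finset.mem_singleton.mp hmem).symm
    subst hu; subst hv
    rcases (Yadj_ss.mp huv).2 with ⟨-, hb, -⟩ | ⟨-, hb, -⟩ <;> exact absurd hb (by decide)
  · have h : DsetI n i = (DsetI n j \ {u}) ∪ {v} := horig
    have hu : u = some (j,(3:Fin 4)) := by
      by_contra hu
      have : some (j,(3:Fin 4)) ∈ DsetI n i := by
        rw [h]
        exact Finset.mem_union_left _ (Finset.mem_sdiff.mpr
          ⟨by simp [DsetI], by simpa using fun he => hu he.symm⟩)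
      exact hij (three_mem_DsetI_iff.mp this).symm
    have hv : v = some (i,(3:Fin 4)) := by
      have : some (i,(3:Fin 4)) ∈ (DsetI n j \ {u}) ∪ {v} := by
        rw [← h]; simp [DsetI]
      rcases Finset.mem_union.mp this with hmem | hmem
      · exact absurd (three_mem_DsetI_iff.mp (Finset.mem_sdiff.mp hmem).1) hij
      · exact (Finset.mem_singleton.mp hmem).symm
    subst hu; subst hv
    rcases (Yadj_ss.mp huv).2 with ⟨-, hb, -⟩ | ⟨-, hb, -⟩ <;> exact absurd hb (by decide)

lemma gamma_adj_iff {a b : Option (Fin n)} :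
    (gammaGraph (Ygraph n)).Adj (gmap n a) (gmap n b) ↔ (_root_.starGraph n).Adj a b := by
  match a, b with
  | none, none => simp [star_adj]
  | none, some i =>
      simp only [star_adj]
      exact ⟨fun _ => ⟨by simp, by simp⟩, fun _ => gamma_adj_none_some⟩
  | some i, none =>
      rw [SimpleGraph.adj_comm, SimpleGraph.adj_comm (_root_.starGraph n)]
      simp only [star_adj]
      exact ⟨fun _ => ⟨by simp, by simp⟩, fun _ => gamma_adj_none_some⟩
  | some i, some j =>
      by_cases hij : i = j
      · subst hij; simp [star_adj]
      · simp only [star_adj]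
        constructor
        · intro h; exact absurd h (gamma_not_adj_some_some hij)
        · rintro ⟨-, h | h⟩ <;> simp_all

noncomputable def isoY (n : ℕ) : _root_.starGraph n ≃g gammaGraph (Ygraph n) :=
  { Equiv.ofBijective (gmap n) ⟨gmap_inj, gmap_surj⟩ with
    map_rel_iff' := gamma_adj_iff }

end Aux5
theorem stmt15 (n : ℕ) (hn : 1 ≤ n) :
    ∃ e : (gammaGraph (Ygraph n)) ≃g _root_.starGraph n,
      ∀ D : {D : Finset (Option (Fin n × Fin 4)) // isMinDomSet (Ygraph n) D},
        e D ≠ none →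
          ∀ x ∈ D.1, (privN (Ygraph n) D.1 x \ {x}).Nonempty := by
  refine ⟨(isoY n).symm, ?_⟩
  intro D hne x hx
  have hD : D ≠ gmap n none := by
    intro h
    apply hne
    show (isoY n).toEquiv.symm D = none
    rw [Equiv.symm_apply_eq, h]
    rfl
  rcases classify D.2 with h0 | ⟨i, hDi⟩
  · exact absurd (Subtype.ext h0) hD
  · rw [hDi] at hx
    rcases Finset.mem_insert.mp hx with rfl | hxc
    · -- x = (i,3); external private neighbour: none
      refine ⟨none, ⟨Or.inr (Yadj_sn.mpr rfl), ?_⟩, by simp⟩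
      intro z hz hzne hmem
      rw [hDi] at hz
      rcases Finset.mem_insert.mp hz with rfl | hzc
      · exact hzne rfl
      · rcases mem_centres.mp hzc with ⟨k, rfl⟩
        rcases dominator_of_none hmem with h | ⟨j, h⟩
        · exact nomatch h
        · have h2 : (0:Fin 4) = 3 := (Prod.ext_iff.mp (Option.some.inj h)).2
          exact absurd h2 (by decide)
    · -- x = (j,0); external private neighbour: (j,1)
      rcases mem_centres.mp hxc with ⟨j, rfl⟩
      refine ⟨some (j,1), ⟨centre_dominates, ?_⟩, by simp⟩
      intro z hz hzne hmem
      rcases dominator_of_leaf (by decide) (by decide) hmem with rfl | rfl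
      · exact hzne rfl
      · rw [hDi] at hz
        rcases Finset.mem_insert.mp hz with h | hzc
        · have h2 : (1:Fin 4) = 3 := (Prod.ext_iff.mp (Option.some.inj h)).2
          exact absurd h2 (by decide)
        · rcases mem_centres.mp hzc with ⟨k, hk⟩
          have h2 : (1:Fin 4) = 0 := (Prod.ext_iff.mp (Option.some.inj hk)).2
          exact absurd h2 (by decide)
end
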